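/- Let σ ∈ I_{n,k}^max and υ ∈ I_{n,k} with (i,i+1) ∈ σ and (i,i+1) ∈ υ, and let σ̃ = σ̃^{(i,i+1)} and υ̃ = υ̃^{(i,i+1)} in I_{n−2,k−1} be obtained by extracting the arc (i,i+1). Then υ ≤ σ if and only if υ̃ ≤ σ̃; υ is a singular point of σ if and only if υ̃ is a singular point of σ̃; and υ ∈ Sing(σ) if and only if υ̃ ∈ Sing(σ̃). -/

import Mathlib

/- Link patterns: an involution in `I_{n,k}` (k disjoint 2-cycles in S_n) is identified
with its set of arcs, a finset of pairs `(i,j)` with `1 ≤ i < j ≤ n`, pairwise disjoint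
endpoints, of cardinality `k`. -/

attribute [local instance] Classical.propDecidable

namespace LinkPatterns

/-- `σ` is a link pattern on the points `1,…,n`: each arc `(i,j)` satisfies
`1 ≤ i < j ≤ n` and distinct arcs have pairwise distinct endpoints. -/
def IsLinkPattern (n : ℕ) (σ : Finset (ℕ × ℕ)) : Prop :=
  (∀ p ∈ σ, 1 ≤ p.1 ∧ p.1 < p.2 ∧ p.2 ≤ n) ∧
  (∀ p ∈ σ, ∀ q ∈ σ, p ≠ q → p.1 ≠ q.1 ∧ p.1 ≠ q.2 ∧ p.2 ≠ q.1 ∧ p.2 ≠ q.2)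

/-- The fixed points `σ⁰` of a link pattern on `1,…,n`. -/
noncomputable def fixedPts (n : ℕ) (σ : Finset (ℕ × ℕ)) : Finset ℕ :=
  (Finset.Icc 1 n).filter (fun f => ∀ p ∈ σ, p.1 ≠ f ∧ p.2 ≠ f)

/-- `c(σ)`: the number of crossings, i.e. of pairs of arcs `(i,j),(i',j')` with
`i < i' < j < j'`. -/
noncomputable def crossings (σ : Finset (ℕ × ℕ)) : ℕ :=
  ((σ ×ˢ σ).filter (fun q => q.1.1 < q.2.1 ∧ q.2.1 < q.1.2 ∧ q.1.2 < q.2.2)).card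

/-- `b(σ)`: the number of pairs (arc, fixed point) with the fixed point strictly
under the arc. -/
noncomputable def bridges (n : ℕ) (σ : Finset (ℕ × ℕ)) : ℕ :=
  ((σ ×ˢ fixedPts n σ).filter (fun q => q.1.1 < q.2 ∧ q.2 < q.1.2)).card

/-- `R_{[a,b]}(σ)`: the number of arcs `(i,j) ∈ σ` with `a ≤ i < j ≤ b`. -/
noncomputable def RInt (σ : Finset (ℕ × ℕ)) (a b : ℕ) : ℕ :=
  (σ.filter (fun p => a ≤ p.1 ∧ p.2 ≤ b)).card

/-- The partial order: `υ ≤ σ` iff `R_{[a,b]}(υ) ≤ R_{[a,b]}(σ)` for all `1 ≤ a < b ≤ n`. -/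
def lpLE (n : ℕ) (υ σ : Finset (ℕ × ℕ)) : Prop :=
  ∀ a b : ℕ, 1 ≤ a → a < b → b ≤ n → RInt υ a b ≤ RInt σ a b

/-- `σ'` is a predecessor of `σ`, i.e. is obtained from `σ` by an elementary move
forward (of first or second type). -/
def IsPredecessor (n : ℕ) (σ' σ : Finset (ℕ × ℕ)) : Prop :=
  (∃ i j f : ℕ, (i, j) ∈ σ ∧ f ∈ fixedPts n σ ∧ i < f ∧ f < j ∧
    (σ' = insert (i, f) (σ.erase (i, j)) ∨ σ' = insert (f, j) (σ.erase (i, j)))) ∨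
  (∃ i j l m : ℕ, (i, j) ∈ σ ∧ (l, m) ∈ σ ∧ i < l ∧ l < j ∧ j < m ∧
    (σ' = insert (i, l) (insert (j, m) ((σ.erase (i, j)).erase (l, m))) ∨
     σ' = insert (i, m) (insert (l, j) ((σ.erase (i, j)).erase (l, m)))))

/-- All finsets of pairs of points of `1,…,n`: an ambient finite set in which all link
patterns on `1,…,n` live. -/
noncomputable def allSub (n : ℕ) : Finset (Finset (ℕ × ℕ)) :=
  (Finset.Icc 1 n ×ˢ Finset.Icc 1 n).powerset

/-- `a_{σ,υ}`: the number of `ω ∈ I_{n,k}` with `ω ≤ σ` such that `ω` is a predecessor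
of `υ` or `υ` is a predecessor of `ω` (the number of edges at `υ` in the graph `G_σ`). -/
noncomputable def aNum (n k : ℕ) (σ υ : Finset (ℕ × ℕ)) : ℕ :=
  ((allSub n).filter (fun ω => IsLinkPattern n ω ∧ ω.card = k ∧ lpLE n ω σ ∧
    (IsPredecessor n ω υ ∨ IsPredecessor n υ ω))).card

/-- `p_σ := C(n-k,2) - C(n-2k,2) - b(σ) - c(σ)`. -/
noncomputable def pNum (n k : ℕ) (σ : Finset (ℕ × ℕ)) : ℕ :=
  Nat.choose (n - k) 2 - Nat.choose (n - 2 * k) 2 - bridges n σ - crossings σ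

/-- `σ ∈ I_{n,k}^max`: a link pattern with no crossings and no fixed point under an arc. -/
def IsMaximal (n : ℕ) (σ : Finset (ℕ × ℕ)) : Prop :=
  IsLinkPattern n σ ∧ bridges n σ = 0 ∧ crossings σ = 0

/-- `υ` is a singular point of `σ`: `a_{σ,υ} > p_σ`. -/
def IsSingularPt (n k : ℕ) (σ υ : Finset (ℕ × ℕ)) : Prop :=
  pNum n k σ < aNum n k σ υ

/-- `υ ∈ Sing(σ)`: `υ ∈ I_{n,k}`, `υ ≤ σ`, `υ` is a singular point of `σ`, and `υ` is
maximal w.r.t. `≤` among the singular points of `σ`. -/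
def InSing (n k : ℕ) (σ υ : Finset (ℕ × ℕ)) : Prop :=
  IsLinkPattern n υ ∧ υ.card = k ∧ lpLE n υ σ ∧ IsSingularPt n k σ υ ∧
  ∀ ω : Finset (ℕ × ℕ), IsLinkPattern n ω → ω.card = k → lpLE n ω σ →
    IsSingularPt n k σ ω → lpLE n υ ω → ω = υ

/-- `τ*(σ)`: the set of minimal arcs `(i,i+1)` of `σ`. -/
noncomputable def tauStar (σ : Finset (ℕ × ℕ)) : Finset (ℕ × ℕ) :=
  σ.filter (fun p => p.2 = p.1 + 1)

/-- `ρ(σ)` for `σ ∈ I_{n,k}^max`. -/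
noncomputable def rho (n : ℕ) (σ : Finset (ℕ × ℕ)) : ℕ :=
  if 1 ∈ fixedPts n σ ∧ n ∈ fixedPts n σ then (tauStar σ).card + 2
  else if 1 ∈ fixedPts n σ ∨ n ∈ fixedPts n σ ∨ (1, n) ∈ σ then (tauStar σ).card + 1
  else (tauStar σ).card

/-- The extraction `σ̃^{(i,i+1)}`: delete the arc `(i,i+1)` together with the points
`i, i+1` and renumber the remaining points. -/
noncomputable def extract (i : ℕ) (σ : Finset (ℕ × ℕ)) : Finset (ℕ × ℕ) :=
  (σ.erase (i, i + 1)).image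
    (fun p => (if p.1 < i then p.1 else p.1 - 2, if p.2 < i then p.2 else p.2 - 2))

/-- `σ₊ₐ`: shift every point of `σ` by `a`. -/
noncomputable def shiftBy (a : ℕ) (σ : Finset (ℕ × ℕ)) : Finset (ℕ × ℕ) :=
  σ.image (fun p => (p.1 + a, p.2 + a))

/-- The projection `π_{a,b}(σ)` renumbered to a link pattern on `1,…,b-a+1`. -/
noncomputable def proj (a b : ℕ) (σ : Finset (ℕ × ℕ)) : Finset (ℕ × ℕ) :=
  (σ.filter (fun p => a ≤ p.1 ∧ p.2 ≤ b)).image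
    (fun p => (p.1 - (a - 1), p.2 - (a - 1)))

/-- The arc `p` lies over the arc `(i,j)`: `p.1 < i < j < p.2`. -/
def ArcOver (p : ℕ × ℕ) (i j : ℕ) : Prop := p.1 < i ∧ j < p.2

/-- The pair of arcs `(i,j),(i',j')` of `σ` is admissible at `[1,n]`. -/
def AdmissiblePair (n : ℕ) (σ : Finset (ℕ × ℕ)) (i j i' j' : ℕ) : Prop :=
  (i, j) ∈ σ ∧ (i', j') ∈ σ ∧
  1 < i ∧ i < j ∧ j < i' ∧ i' < j' ∧ j' < n ∧
  1 ∈ fixedPts n σ ∧ n ∈ fixedPts n σ ∧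
  (∀ f ∈ fixedPts n σ, f ≠ 1 → f ≠ n → j ≤ f ∧ f ≤ i') ∧
  (∀ p ∈ σ, ¬(p.1 < i ∧ i < p.2 ∧ p.2 < j) ∧ ¬(i < p.1 ∧ p.1 < j ∧ j < p.2) ∧
            ¬(p.1 < i' ∧ i' < p.2 ∧ p.2 < j') ∧ ¬(i' < p.1 ∧ p.1 < j' ∧ j' < p.2)) ∧
  (∀ p ∈ σ, (ArcOver p i j ∨ ArcOver p i' j') → (p.1 < i ∧ j' < p.2)) ∧
  (∀ p ∈ σ, ∀ q ∈ σ, (p.1 < i ∧ j' < p.2) → (q.1 < i ∧ j' < q.2) →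
      p.1 < q.1 → q.2 < p.2) ∧
  ((fixedPts n σ).filter (fun f => j ≤ f ∧ f ≤ i')).card *
    (σ.filter (fun p => p.1 < i ∧ j' < p.2)).card = 0


/-! ### Auxiliary infrastructure for extraction of a minimal arc -/

/-- Shift up by 2 above `i`. -/
def phi (i x : ℕ) : ℕ := if x < i then x else x + 2

/-- Shift down by 2 above `i` (inverse of `phi` away from `{i, i+1}`). -/
def psi (i x : ℕ) : ℕ := if x < i then x else x - 2

/-- `τ` contains the minimal arc `(i,i+1)` and every other arc avoids `i, i+1`. -/
def Good (i : ℕ) (τ : Finset (ℕ × ℕ)) : Prop :=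
  (i, i + 1) ∈ τ ∧ ∀ p ∈ τ, p ≠ (i, i + 1) →
    p.1 ≠ i ∧ p.1 ≠ i + 1 ∧ p.2 ≠ i ∧ p.2 ≠ i + 1

lemma good_of_mem {n i : ℕ} {τ : Finset (ℕ × ℕ)} (h : IsLinkPattern n τ)
    (hm : (i, i + 1) ∈ τ) : Good i τ :=
  ⟨hm, fun p hp hne => h.2 p hp (i, i + 1) hm hne⟩

lemma psi_phi (i x : ℕ) : psi i (phi i x) = x := by
  unfold phi psi; split_ifs <;> omega

lemma phi_psi {i x : ℕ} (h1 : x ≠ i) (h2 : x ≠ i + 1) : phi i (psi i x) = x := by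
  unfold phi psi; split_ifs <;> omega

lemma phi_lt_iff {i x y : ℕ} : phi i x < phi i y ↔ x < y := by
  unfold phi; split_ifs <;> omega

lemma phi_ne_i {i x : ℕ} : phi i x ≠ i ∧ phi i x ≠ i + 1 := by
  unfold phi; split_ifs <;> omega

lemma mem_extract {i : ℕ} {τ : Finset (ℕ × ℕ)} (h : Good i τ) (u v : ℕ) :
    (u, v) ∈ extract i τ ↔ (phi i u, phi i v) ∈ τ := by
  unfold extract
  simp only [Finset.mem_image, Finset.mem_erase]
  constructor
  · rintro ⟨p, ⟨hne, hp⟩, heq⟩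
    obtain ⟨h1, h2, h3, h4⟩ := h.2 p hp hne
    have e1 : u = psi i p.1 := by
      have := congrArg Prod.fst heq.symm
      simpa [psi] using this
    have e2 : v = psi i p.2 := by
      have := congrArg Prod.snd heq.symm
      simpa [psi] using this
    rw [e1, e2, phi_psi h1 h2, phi_psi h3 h4]
    exact hp
  · intro hmem
    refine ⟨(phi i u, phi i v), ⟨?_, hmem⟩, ?_⟩
    · intro hcon
      exact phi_ne_i.1 (by simpa using congrArg Prod.fst hcon)
    · simp only [Prod.mk.injEq]
      constructor <;> (unfold phi; split_ifs <;> omega)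

lemma phi_le_iff {i x y : ℕ} : phi i x ≤ phi i y ↔ x ≤ y := by
  unfold phi; split_ifs <;> omega

lemma pair_mem_bounds {n i : ℕ} {τ : Finset (ℕ × ℕ)} (h : IsLinkPattern n τ)
    (hm : (i, i + 1) ∈ τ) : 1 ≤ i ∧ i + 1 ≤ n := by
  have := h.1 _ hm; exact ⟨this.1, this.2.2⟩

lemma extract_isLinkPattern {n i : ℕ} {τ : Finset (ℕ × ℕ)} (h : IsLinkPattern n τ)
    (hg : Good i τ) : IsLinkPattern (n - 2) (extract i τ) := by
  obtain ⟨hi1, hin⟩ := pair_mem_bounds h hg.1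
  constructor
  · rintro ⟨u, v⟩ hp
    rw [mem_extract hg] at hp
    have := h.1 _ hp
    simp only at this ⊢
    unfold phi at this; split_ifs at this <;> omega
  · rintro ⟨u, v⟩ hp ⟨u', v'⟩ hq hne
    rw [mem_extract hg] at hp hq
    have hne' : (phi i u, phi i v) ≠ (phi i u', phi i v') := by
      intro hcon
      apply hne
      simp only [Prod.mk.injEq] at hcon ⊢
      constructor
      · have := congrArg (psi i) hcon.1; rwa [psi_phi, psi_phi] at this
      · have := congrArg (psi i) hcon.2; rwa [psi_phi, psi_phi] at this
    have := h.2 _ hp _ hq hne'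
    simp only at this ⊢
    refine ⟨fun e => this.1 (by rw [e]), fun e => this.2.1 (by rw [e]),
      fun e => this.2.2.1 (by rw [e]), fun e => this.2.2.2 (by rw [e])⟩

lemma extract_card {i : ℕ} {τ : Finset (ℕ × ℕ)} (hg : Good i τ) :
    (extract i τ).card = τ.card - 1 := by
  unfold extract
  rw [Finset.card_image_of_injOn, Finset.card_erase_of_mem hg.1]
  intro p hp q hq heq
  rw [Finset.mem_coe, Finset.mem_erase] at hp hq
  obtain ⟨hp1, hp2, hp3, hp4⟩ := hg.2 p hp.2 hp.1
  obtain ⟨hq1, hq2, hq3, hq4⟩ := hg.2 q hq.2 hq.1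
  simp only [Prod.mk.injEq] at heq
  have e1 : psi i p.1 = psi i q.1 := by unfold psi; exact heq.1
  have e2 : psi i p.2 = psi i q.2 := by unfold psi; exact heq.2
  have f1 := congrArg (phi i) e1
  have f2 := congrArg (phi i) e2
  rw [phi_psi hp1 hp2, phi_psi hq1 hq2] at f1
  rw [phi_psi hp3 hp4, phi_psi hq3 hq4] at f2
  exact Prod.ext f1 f2

lemma mem_fixed_extract {n i : ℕ} {τ : Finset (ℕ × ℕ)} (h : IsLinkPattern n τ)
    (hg : Good i τ) (u : ℕ) :
    u ∈ fixedPts (n - 2) (extract i τ) ↔ phi i u ∈ fixedPts n τ := by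
  obtain ⟨hi1, hin⟩ := pair_mem_bounds h hg.1
  unfold fixedPts
  simp only [Finset.mem_filter, Finset.mem_Icc]
  constructor
  · rintro ⟨⟨hu1, hu2⟩, harcs⟩
    refine ⟨⟨?_, ?_⟩, ?_⟩
    · unfold phi; split_ifs <;> omega
    · unfold phi; split_ifs <;> omega
    · intro p hp
      by_cases hpe : p = (i, i + 1)
      · subst hpe; exact ⟨phi_ne_i.1 ∘ Eq.symm, phi_ne_i.2 ∘ Eq.symm⟩
      · obtain ⟨h1, h2, h3, h4⟩ := hg.2 p hp hpe
        have hmem : (psi i p.1, psi i p.2) ∈ extract i τ := by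
          rw [mem_extract hg, phi_psi h1 h2, phi_psi h3 h4]
          exact hp
        have := harcs _ hmem
        simp only at this
        constructor
        · intro e
          exact this.1 (by rw [e]; exact psi_phi i u)
        · intro e
          exact this.2 (by rw [e]; exact psi_phi i u)
  · rintro ⟨⟨hu1, hu2⟩, harcs⟩
    refine ⟨⟨?_, ?_⟩, ?_⟩
    · unfold phi at hu1; split_ifs at hu1 <;> omega
    · unfold phi at hu2; split_ifs at hu2 <;> omega
    · rintro ⟨a, b⟩ hab
      rw [mem_extract hg] at hab
      have := harcs _ hab
      simp only at this ⊢
      exact ⟨fun e => this.1 (by rw [e]), fun e => this.2 (by rw [e])⟩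

lemma RInt_eq_zero {τ : Finset (ℕ × ℕ)} {a b : ℕ} (h : ∀ p ∈ τ, p.1 < p.2)
    (hba : b ≤ a) : RInt τ a b = 0 := by
  unfold RInt
  rw [Finset.card_eq_zero, Finset.filter_eq_empty_iff]
  rintro p hp ⟨h1, h2⟩
  exact absurd (h p hp) (by omega)

/-- Left endpoint renumbering for intervals. -/
def lo (i a : ℕ) : ℕ := if a ≤ i then a else if a = i + 1 then i else a - 2

/-- Right endpoint renumbering for intervals. -/
def hi (i b : ℕ) : ℕ := if b < i then b else if b = i then i - 1 else b - 2

lemma cond_lo {i a u : ℕ} : a ≤ phi i u ↔ lo i a ≤ u := by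
  unfold phi lo; split_ifs <;> omega

lemma cond_hi {i b v : ℕ} (hi1 : 1 ≤ i) : phi i v ≤ b ↔ v ≤ hi i b := by
  unfold phi hi; split_ifs <;> omega

lemma RInt_extract {n i : ℕ} {τ : Finset (ℕ × ℕ)} (h : IsLinkPattern n τ)
    (hg : Good i τ) (a b : ℕ) :
    RInt τ a b =
      (if a ≤ i ∧ i + 1 ≤ b then 1 else 0) + RInt (extract i τ) (lo i a) (hi i b) := by
  obtain ⟨hi1, hin⟩ := pair_mem_bounds h hg.1
  unfold RInt
  have key : ((τ.erase (i, i + 1)).filter (fun p => a ≤ p.1 ∧ p.2 ≤ b)).card =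
      ((extract i τ).filter (fun p => lo i a ≤ p.1 ∧ p.2 ≤ hi i b)).card := by
    apply Finset.card_nbij' (fun p => (psi i p.1, psi i p.2))
      (fun q => (phi i q.1, phi i q.2))
    · intro p hp
      simp only [Finset.mem_coe, Finset.mem_filter, Finset.mem_erase] at hp ⊢
      obtain ⟨⟨hpe, hpm⟩, hp1, hp2⟩ := hp
      obtain ⟨h1, h2, h3, h4⟩ := hg.2 p hpm hpe
      refine ⟨?_, ?_, ?_⟩
      · rw [mem_extract hg, phi_psi h1 h2, phi_psi h3 h4]; exact hpm
      · rw [← cond_lo, phi_psi h1 h2]; exact hp1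
      · rw [← cond_hi hi1, phi_psi h3 h4]; exact hp2
    · intro q hq
      simp only [Finset.mem_coe, Finset.mem_filter, Finset.mem_erase] at hq ⊢
      obtain ⟨hqm, hq1, hq2⟩ := hq
      rw [mem_extract hg] at hqm
      refine ⟨⟨?_, hqm⟩, ?_, ?_⟩
      · intro hcon
        exact phi_ne_i.1 (by simpa using congrArg Prod.fst hcon)
      · rw [cond_lo]; exact hq1
      · rw [cond_hi hi1]; exact hq2
    · intro p hp
      simp only [Finset.mem_coe, Finset.mem_filter, Finset.mem_erase] at hp
      obtain ⟨⟨hpe, hpm⟩, _, _⟩ := hp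
      obtain ⟨h1, h2, h3, h4⟩ := hg.2 p hpm hpe
      simp only [phi_psi h1 h2, phi_psi h3 h4]
    · intro q hq
      simp only [psi_phi]
  have split : τ.filter (fun p => a ≤ p.1 ∧ p.2 ≤ b) =
      if a ≤ i ∧ i + 1 ≤ b then
        insert (i, i + 1) ((τ.erase (i, i + 1)).filter (fun p => a ≤ p.1 ∧ p.2 ≤ b))
      else (τ.erase (i, i + 1)).filter (fun p => a ≤ p.1 ∧ p.2 ≤ b) := by
    conv_lhs => rw [← Finset.insert_erase hg.1]
    rw [Finset.filter_insert]
  rw [split]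
  split_ifs with hcase
  · rw [Finset.card_insert_of_notMem (by simp [Finset.mem_filter]), key]
    omega
  · rw [key]
    omega

lemma lpLE_extract_iff {n i : ℕ} {σ υ : Finset (ℕ × ℕ)}
    (hσ : IsLinkPattern n σ) (hgσ : Good i σ)
    (hυ : IsLinkPattern n υ) (hgυ : Good i υ) :
    lpLE n υ σ ↔ lpLE (n - 2) (extract i υ) (extract i σ) := by
  obtain ⟨hi1, hin⟩ := pair_mem_bounds hσ hgσ.1
  constructor
  · intro hle a' b' ha1 hab hbn
    set a := if a' ≤ i then a' else a' + 2 with hadef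
    set b := if b' < i then b' else b' + 2 with hbdef
    have hloa : lo i a = a' := by unfold a; unfold lo; split_ifs <;> omega
    have hhib : hi i b = b' := by unfold b; unfold hi; split_ifs <;> omega
    have h1 : 1 ≤ a := by unfold a; split_ifs <;> omega
    have h2 : a < b := by unfold a b; split_ifs <;> omega
    have h3 : b ≤ n := by unfold b; split_ifs <;> omega
    have eυ := RInt_extract hυ hgυ a b
    have eσ := RInt_extract hσ hgσ a b
    rw [hloa, hhib] at eυ eσ
    have := hle a b h1 h2 h3
    omega
  · intro hle a b ha1 hab hbn
    have eυ := RInt_extract hυ hgυ a b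
    have eσ := RInt_extract hσ hgσ a b
    by_cases hnd : 1 ≤ lo i a ∧ lo i a < hi i b ∧ hi i b ≤ n - 2
    · have := hle (lo i a) (hi i b) hnd.1 hnd.2.1 hnd.2.2
      omega
    · have hlo1 : 1 ≤ lo i a := by unfold lo; split_ifs <;> omega
      have hhib : hi i b ≤ n - 2 := by unfold hi; split_ifs <;> omega
      have hnlt : ¬ lo i a < hi i b := fun hcon => hnd ⟨hlo1, hcon, hhib⟩
      have z1 : RInt (extract i υ) (lo i a) (hi i b) = 0 :=
        RInt_eq_zero (fun p hp => ((extract_isLinkPattern hυ hgυ).1 p hp).2.1) (by omega)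
      omega

lemma phi_inj {i : ℕ} : Function.Injective (phi i) := by
  intro x y h
  have := congrArg (psi i) h
  rwa [psi_phi, psi_phi] at this

/-- Inverse of extraction: reinsert the arc `(i, i+1)`. -/
def inj (i : ℕ) (τ : Finset (ℕ × ℕ)) : Finset (ℕ × ℕ) :=
  insert (i, i + 1) (τ.image (fun p => (phi i p.1, phi i p.2)))

lemma good_inj (i : ℕ) (τ : Finset (ℕ × ℕ)) : Good i (inj i τ) := by
  refine ⟨Finset.mem_insert_self _ _, ?_⟩
  intro p hp hne
  rcases Finset.mem_insert.mp hp with h | h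
  · exact absurd h hne
  · obtain ⟨q, _, rfl⟩ := Finset.mem_image.mp h
    exact ⟨phi_ne_i.1, phi_ne_i.2, phi_ne_i.1, phi_ne_i.2⟩

lemma extract_inj (i : ℕ) (τ : Finset (ℕ × ℕ)) : extract i (inj i τ) = τ := by
  ext ⟨u, v⟩
  rw [mem_extract (good_inj i τ)]
  unfold inj
  simp only [Finset.mem_insert, Finset.mem_image, Prod.mk.injEq]
  constructor
  · rintro (⟨h1, _⟩ | ⟨q, hq, h1, h2⟩)
    · exact absurd h1 phi_ne_i.1
    · rwa [← phi_inj h1, ← phi_inj h2]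
  · intro h
    exact Or.inr ⟨(u, v), h, rfl, rfl⟩

lemma inj_extract {i : ℕ} {τ : Finset (ℕ × ℕ)} (hg : Good i τ) :
    inj i (extract i τ) = τ := by
  ext ⟨u, v⟩
  unfold inj
  simp only [Finset.mem_insert, Finset.mem_image, Prod.mk.injEq]
  constructor
  · rintro (h | ⟨⟨a, b⟩, hab, h1, h2⟩)
    · rw [h.1, h.2]; exact hg.1
    · rw [mem_extract hg] at hab
      rw [← h1, ← h2]; exact hab
  · intro h
    by_cases he : (u, v) = (i, i + 1)
    · left; rw [Prod.mk.injEq] at he; exact ⟨he.1, he.2⟩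
    · obtain ⟨h1, h2, h3, h4⟩ := hg.2 _ h he
      right
      refine ⟨(psi i u, psi i v), ?_, phi_psi h1 h2, phi_psi h3 h4⟩
      rw [mem_extract hg, phi_psi h1 h2, phi_psi h3 h4]
      exact h

lemma inj_isLinkPattern {n i : ℕ} {τ : Finset (ℕ × ℕ)}
    (h : IsLinkPattern (n - 2) τ) (hi1 : 1 ≤ i) (hin : i + 1 ≤ n) :
    IsLinkPattern n (inj i τ) := by
  constructor
  · intro p hp
    rcases Finset.mem_insert.mp hp with rfl | hm
    · exact ⟨hi1, by omega, hin⟩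
    · obtain ⟨q, hq, rfl⟩ := Finset.mem_image.mp hm
      obtain ⟨b1, b2, b3⟩ := h.1 q hq
      refine ⟨?_, phi_lt_iff.mpr b2, ?_⟩ <;> (simp only; unfold phi; split_ifs <;> omega)
  · intro p hp q hq hne
    rcases Finset.mem_insert.mp hp with rfl | hm
    · rcases Finset.mem_insert.mp hq with rfl | hm'
      · exact absurd rfl hne
      · obtain ⟨q', _, rfl⟩ := Finset.mem_image.mp hm'
        exact ⟨fun e => phi_ne_i.1 e.symm, fun e => phi_ne_i.1 e.symm,
          fun e => phi_ne_i.2 e.symm, fun e => phi_ne_i.2 e.symm⟩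
    · obtain ⟨p', hp', rfl⟩ := Finset.mem_image.mp hm
      rcases Finset.mem_insert.mp hq with rfl | hm'
      · exact ⟨phi_ne_i.1, phi_ne_i.2, phi_ne_i.1, phi_ne_i.2⟩
      · obtain ⟨q', hq', rfl⟩ := Finset.mem_image.mp hm'
        have hne' : p' ≠ q' := fun e => hne (by rw [e])
        obtain ⟨d1, d2, d3, d4⟩ := h.2 p' hp' q' hq' hne'
        exact ⟨fun e => d1 (phi_inj e), fun e => d2 (phi_inj e),
          fun e => d3 (phi_inj e), fun e => d4 (phi_inj e)⟩

lemma inj_card (i : ℕ) (τ : Finset (ℕ × ℕ)) : (inj i τ).card = τ.card + 1 := by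
  unfold inj
  rw [Finset.card_insert_of_notMem, Finset.card_image_of_injective]
  · intro p q hpq
    simp only [Prod.mk.injEq] at hpq
    exact Prod.ext (phi_inj hpq.1) (phi_inj hpq.2)
  · intro hc
    obtain ⟨q, _, hq⟩ := Finset.mem_image.mp hc
    exact phi_ne_i.1 (by simpa using congrArg Prod.fst hq)

/-- Pair avoids the two deleted points. -/
def Avd (i : ℕ) (p : ℕ × ℕ) : Prop :=
  p.1 ≠ i ∧ p.1 ≠ i + 1 ∧ p.2 ≠ i ∧ p.2 ≠ i + 1

lemma psi_lt_psi {i x y : ℕ} (hx : x ≠ i ∧ x ≠ i + 1) (hy : y ≠ i ∧ y ≠ i + 1)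
    (h : x < y) : psi i x < psi i y := by
  obtain ⟨hx1, hx2⟩ := hx; obtain ⟨hy1, hy2⟩ := hy
  unfold psi; split_ifs <;> omega

lemma F_eq_iff {i : ℕ} {p : ℕ × ℕ} (hp : Avd i p) (u v : ℕ) :
    (phi i u, phi i v) = p ↔ (u, v) = (psi i p.1, psi i p.2) := by
  obtain ⟨h1, h2, h3, h4⟩ := hp
  constructor
  · rintro rfl
    simp only [psi_phi]
  · rintro h
    simp only [Prod.mk.injEq] at h
    rw [h.1, h.2, phi_psi h1 h2, phi_psi h3 h4]

lemma good_insert_erase {i : ℕ} {τ : Finset (ℕ × ℕ)} (hg : Good i τ)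
    {old new : ℕ × ℕ} (holdne : old ≠ (i, i + 1)) (hnew : Avd i new) :
    Good i (insert new (τ.erase old)) := by
  refine ⟨Finset.mem_insert_of_mem (Finset.mem_erase.mpr ⟨fun e => holdne e.symm, hg.1⟩), ?_⟩
  intro p hp hpne
  rcases Finset.mem_insert.mp hp with rfl | hm
  · exact hnew
  · exact hg.2 p (Finset.mem_of_mem_erase hm) hpne

lemma good_insert2_erase2 {i : ℕ} {τ : Finset (ℕ × ℕ)} (hg : Good i τ)
    {o1 o2 n1 n2 : ℕ × ℕ} (ho1 : o1 ≠ (i, i + 1)) (ho2 : o2 ≠ (i, i + 1))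
    (hn1 : Avd i n1) (hn2 : Avd i n2) :
    Good i (insert n1 (insert n2 ((τ.erase o1).erase o2))) := by
  refine ⟨?_, ?_⟩
  · refine Finset.mem_insert_of_mem (Finset.mem_insert_of_mem ?_)
    exact Finset.mem_erase.mpr ⟨fun e => ho2 e.symm,
      Finset.mem_erase.mpr ⟨fun e => ho1 e.symm, hg.1⟩⟩
  · intro p hp hpne
    rcases Finset.mem_insert.mp hp with rfl | hm
    · exact hn1
    rcases Finset.mem_insert.mp hm with rfl | hm'
    · exact hn2
    · exact hg.2 p (Finset.mem_of_mem_erase (Finset.mem_of_mem_erase hm')) hpne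

lemma avd_of_mem {i : ℕ} {τ : Finset (ℕ × ℕ)} (hg : Good i τ) {p : ℕ × ℕ}
    (hp : p ∈ τ) (hne : p ≠ (i, i + 1)) : Avd i p := hg.2 p hp hne

lemma extract_move1 {i : ℕ} {τ : Finset (ℕ × ℕ)} (hg : Good i τ)
    {old new : ℕ × ℕ} (hold : old ∈ τ) (holdne : old ≠ (i, i + 1)) (hnew : Avd i new) :
    extract i (insert new (τ.erase old)) =
      insert (psi i new.1, psi i new.2)
        ((extract i τ).erase (psi i old.1, psi i old.2)) := by
  have hgood := good_insert_erase hg holdne hnew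
  have havold := avd_of_mem hg hold holdne
  ext ⟨u, v⟩
  rw [mem_extract hgood, Finset.mem_insert, Finset.mem_erase, Finset.mem_insert,
    Finset.mem_erase, mem_extract hg]
  constructor
  · rintro (he | ⟨hne, hm⟩)
    · exact Or.inl ((F_eq_iff hnew u v).mp he)
    · exact Or.inr ⟨fun hc => hne ((F_eq_iff havold u v).mpr hc), hm⟩
  · rintro (he | ⟨hne, hm⟩)
    · exact Or.inl ((F_eq_iff hnew u v).mpr he)
    · exact Or.inr ⟨fun hc => hne ((F_eq_iff havold u v).mp hc), hm⟩

lemma extract_move2 {i : ℕ} {τ : Finset (ℕ × ℕ)} (hg : Good i τ)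
    {o1 o2 n1 n2 : ℕ × ℕ} (ho1 : o1 ∈ τ) (ho1n : o1 ≠ (i, i + 1))
    (ho2 : o2 ∈ τ) (ho2n : o2 ≠ (i, i + 1))
    (hn1 : Avd i n1) (hn2 : Avd i n2) :
    extract i (insert n1 (insert n2 ((τ.erase o1).erase o2))) =
      insert (psi i n1.1, psi i n1.2) (insert (psi i n2.1, psi i n2.2)
        (((extract i τ).erase (psi i o1.1, psi i o1.2)).erase
          (psi i o2.1, psi i o2.2))) := by
  have hgood := good_insert2_erase2 hg ho1n ho2n hn1 hn2
  have hav1 := avd_of_mem hg ho1 ho1n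
  have hav2 := avd_of_mem hg ho2 ho2n
  ext ⟨u, v⟩
  rw [mem_extract hgood, Finset.mem_insert, Finset.mem_insert, Finset.mem_erase,
    Finset.mem_erase, Finset.mem_insert, Finset.mem_insert, Finset.mem_erase,
    Finset.mem_erase, mem_extract hg]
  constructor
  · rintro (he | he | ⟨hne2, hne1, hm⟩)
    · exact Or.inl ((F_eq_iff hn1 u v).mp he)
    · exact Or.inr (Or.inl ((F_eq_iff hn2 u v).mp he))
    · exact Or.inr (Or.inr ⟨fun hc => hne2 ((F_eq_iff hav2 u v).mpr hc),
        fun hc => hne1 ((F_eq_iff hav1 u v).mpr hc), hm⟩)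
  · rintro (he | he | ⟨hne2, hne1, hm⟩)
    · exact Or.inl ((F_eq_iff hn1 u v).mpr he)
    · exact Or.inr (Or.inl ((F_eq_iff hn2 u v).mpr he))
    · exact Or.inr (Or.inr ⟨fun hc => hne2 ((F_eq_iff hav2 u v).mp hc),
        fun hc => hne1 ((F_eq_iff hav1 u v).mp hc), hm⟩)

lemma fix_ne {n i : ℕ} {τ : Finset (ℕ × ℕ)} (hg : Good i τ) {f : ℕ}
    (hf : f ∈ fixedPts n τ) : f ≠ i ∧ f ≠ i + 1 := by
  unfold fixedPts at hf
  rw [Finset.mem_filter] at hf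
  have := hf.2 _ hg.1
  exact ⟨fun e => this.1 e.symm, fun e => this.2 e.symm⟩

/-- A forward move on a pattern containing the minimal arc `(i,i+1)` never removes it. -/
lemma mem_of_pred {n i : ℕ} {ω υ : Finset (ℕ × ℕ)} (hgυ : Good i υ)
    (h : IsPredecessor n ω υ) : (i, i + 1) ∈ ω := by
  rcases h with ⟨x, y, f, hxy, hf, hxf, hfy, hcase⟩ | ⟨a, b, c, d, hab, hcd, h1, h2, h3, hcase⟩
  · have hne : ((i : ℕ), i + 1) ≠ (x, y) := by
      rintro e
      rw [Prod.mk.injEq] at e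
      omega
    rcases hcase with rfl | rfl <;>
      exact Finset.mem_insert_of_mem (Finset.mem_erase.mpr ⟨hne, hgυ.1⟩)
  · have hne1 : ((i : ℕ), i + 1) ≠ (a, b) := by
      rintro e; rw [Prod.mk.injEq] at e; omega
    have hne2 : ((i : ℕ), i + 1) ≠ (c, d) := by
      rintro e; rw [Prod.mk.injEq] at e; omega
    rcases hcase with rfl | rfl <;>
      exact Finset.mem_insert_of_mem (Finset.mem_insert_of_mem
        (Finset.mem_erase.mpr ⟨hne2, Finset.mem_erase.mpr ⟨hne1, hgυ.1⟩⟩))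

lemma isPred_extract_iff {n i : ℕ} {τ₁ τ₂ : Finset (ℕ × ℕ)}
    (h1 : IsLinkPattern n τ₁) (hg1 : Good i τ₁)
    (h2 : IsLinkPattern n τ₂) (hg2 : Good i τ₂) :
    IsPredecessor n τ₁ τ₂ ↔ IsPredecessor (n - 2) (extract i τ₁) (extract i τ₂) := by
  constructor
  · rintro (⟨x, y, f, hxy, hf, hxf, hfy, hcase⟩ |
      ⟨a, b, c, d, hab, hcd, hac, hcb, hbd, hcase⟩)
    · -- bridge move
      have hxyne : (x, y) ≠ ((i : ℕ), i + 1) := by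
        rintro e; rw [Prod.mk.injEq] at e; omega
      obtain ⟨hx1, hx2, hy1, hy2⟩ := avd_of_mem hg2 hxy hxyne
      obtain ⟨hf1, hf2⟩ := fix_ne hg2 hf
      refine Or.inl ⟨psi i x, psi i y, psi i f, ?_, ?_, ?_, ?_, ?_⟩
      · rw [mem_extract hg2, phi_psi hx1 hx2, phi_psi hy1 hy2]; exact hxy
      · rw [mem_fixed_extract h2 hg2, phi_psi hf1 hf2]; exact hf
      · exact psi_lt_psi ⟨hx1, hx2⟩ ⟨hf1, hf2⟩ hxf
      · exact psi_lt_psi ⟨hf1, hf2⟩ ⟨hy1, hy2⟩ hfy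
      · rcases hcase with rfl | rfl
        · left
          exact extract_move1 hg2 hxy hxyne ⟨hx1, hx2, hf1, hf2⟩
        · right
          exact extract_move1 hg2 hxy hxyne ⟨hf1, hf2, hy1, hy2⟩
    · -- crossing move
      have habne : (a, b) ≠ ((i : ℕ), i + 1) := by
        rintro e; rw [Prod.mk.injEq] at e; omega
      have hcdne : (c, d) ≠ ((i : ℕ), i + 1) := by
        rintro e; rw [Prod.mk.injEq] at e; omega
      obtain ⟨ha1, ha2, hb1, hb2⟩ := avd_of_mem hg2 hab habne
      obtain ⟨hc1, hc2, hd1, hd2⟩ := avd_of_mem hg2 hcd hcdne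
      refine Or.inr ⟨psi i a, psi i b, psi i c, psi i d, ?_, ?_, ?_, ?_, ?_, ?_⟩
      · rw [mem_extract hg2, phi_psi ha1 ha2, phi_psi hb1 hb2]; exact hab
      · rw [mem_extract hg2, phi_psi hc1 hc2, phi_psi hd1 hd2]; exact hcd
      · exact psi_lt_psi ⟨ha1, ha2⟩ ⟨hc1, hc2⟩ hac
      · exact psi_lt_psi ⟨hc1, hc2⟩ ⟨hb1, hb2⟩ hcb
      · exact psi_lt_psi ⟨hb1, hb2⟩ ⟨hd1, hd2⟩ hbd
      · rcases hcase with rfl | rfl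
        · left
          exact extract_move2 hg2 hab habne hcd hcdne ⟨ha1, ha2, hc1, hc2⟩
            ⟨hb1, hb2, hd1, hd2⟩
        · right
          exact extract_move2 hg2 hab habne hcd hcdne ⟨ha1, ha2, hd1, hd2⟩
            ⟨hc1, hc2, hb1, hb2⟩
  · rintro (⟨x, y, f, hxy, hf, hxf, hfy, hcase⟩ |
      ⟨a, b, c, d, hab, hcd, hac, hcb, hbd, hcase⟩)
    · -- bridge move downstairs, lift it
      rw [mem_extract hg2] at hxy
      rw [mem_fixed_extract h2 hg2] at hf
      have hxyne : (phi i x, phi i y) ≠ ((i : ℕ), i + 1) := by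
        intro e; exact phi_ne_i.1 (by simpa using congrArg Prod.fst e)
      refine Or.inl ⟨phi i x, phi i y, phi i f, hxy, hf,
        phi_lt_iff.mpr hxf, phi_lt_iff.mpr hfy, ?_⟩
      rcases hcase with he | he
      · left
        have key := extract_move1 (new := (phi i x, phi i f)) hg2 hxy hxyne
          ⟨phi_ne_i.1, phi_ne_i.2, phi_ne_i.1, phi_ne_i.2⟩
        simp only [psi_phi] at key
        rw [← he] at key
        have hgood : Good i (insert (phi i x, phi i f) (τ₂.erase (phi i x, phi i y))) :=
          good_insert_erase hg2 hxyne ⟨phi_ne_i.1, phi_ne_i.2, phi_ne_i.1, phi_ne_i.2⟩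
        rw [← inj_extract hg1, ← key]
        exact inj_extract hgood
      · right
        have key := extract_move1 (new := (phi i f, phi i y)) hg2 hxy hxyne
          ⟨phi_ne_i.1, phi_ne_i.2, phi_ne_i.1, phi_ne_i.2⟩
        simp only [psi_phi] at key
        rw [← he] at key
        have hgood : Good i (insert (phi i f, phi i y) (τ₂.erase (phi i x, phi i y))) :=
          good_insert_erase hg2 hxyne ⟨phi_ne_i.1, phi_ne_i.2, phi_ne_i.1, phi_ne_i.2⟩
        rw [← inj_extract hg1, ← key]
        exact inj_extract hgood
    · -- crossing move downstairs, lift it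
      rw [mem_extract hg2] at hab hcd
      have habne : (phi i a, phi i b) ≠ ((i : ℕ), i + 1) := by
        intro e; exact phi_ne_i.1 (by simpa using congrArg Prod.fst e)
      have hcdne : (phi i c, phi i d) ≠ ((i : ℕ), i + 1) := by
        intro e; exact phi_ne_i.1 (by simpa using congrArg Prod.fst e)
      have havd : ∀ u v : ℕ, Avd i (phi i u, phi i v) := fun u v =>
        ⟨phi_ne_i.1, phi_ne_i.2, phi_ne_i.1, phi_ne_i.2⟩
      refine Or.inr ⟨phi i a, phi i b, phi i c, phi i d, hab, hcd,
        phi_lt_iff.mpr hac, phi_lt_iff.mpr hcb, phi_lt_iff.mpr hbd, ?_⟩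
      rcases hcase with he | he
      · left
        have key := extract_move2 (n1 := (phi i a, phi i c)) (n2 := (phi i b, phi i d))
          hg2 hab habne hcd hcdne (havd a c) (havd b d)
        simp only [psi_phi] at key
        rw [← he] at key
        have hgood := good_insert2_erase2 (n1 := (phi i a, phi i c))
          (n2 := (phi i b, phi i d)) hg2 habne hcdne (havd a c) (havd b d)
        rw [← inj_extract hg1, ← key]
        exact inj_extract hgood
      · right
        have key := extract_move2 (n1 := (phi i a, phi i d)) (n2 := (phi i c, phi i b))
          hg2 hab habne hcd hcdne (havd a d) (havd c b)
        simp only [psi_phi] at key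
        rw [← he] at key
        have hgood := good_insert2_erase2 (n1 := (phi i a, phi i d))
          (n2 := (phi i c, phi i b)) hg2 habne hcdne (havd a d) (havd c b)
        rw [← inj_extract hg1, ← key]
        exact inj_extract hgood

lemma mem_allSub {n : ℕ} {τ : Finset (ℕ × ℕ)} (h : IsLinkPattern n τ) :
    τ ∈ allSub n := by
  unfold allSub
  rw [Finset.mem_powerset]
  intro p hp
  obtain ⟨b1, b2, b3⟩ := h.1 p hp
  rw [Finset.mem_product, Finset.mem_Icc, Finset.mem_Icc]
  exact ⟨⟨b1, by omega⟩, by omega, b3⟩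

lemma card_fixedPts {n : ℕ} {τ : Finset (ℕ × ℕ)} (h : IsLinkPattern n τ) :
    (fixedPts n τ).card = n - 2 * τ.card := by
  classical
  set E := τ.biUnion (fun p => {p.1, p.2}) with hE
  have hfix : fixedPts n τ = Finset.Icc 1 n \ E := by
    ext f
    unfold fixedPts
    simp only [Finset.mem_filter, Finset.mem_sdiff, hE, Finset.mem_biUnion,
      Finset.mem_insert, Finset.mem_singleton, not_exists]
    constructor
    · rintro ⟨hf, harc⟩
      refine ⟨hf, fun p => ?_⟩
      intro ⟨hp, hor⟩
      rcases hor with e | e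
      · exact (harc p hp).1 e.symm
      · exact (harc p hp).2 e.symm
    · rintro ⟨hf, harc⟩
      refine ⟨hf, fun p hp => ?_⟩
      have := harc p
      constructor
      · intro e; exact this ⟨hp, Or.inl e.symm⟩
      · intro e; exact this ⟨hp, Or.inr e.symm⟩
  have hEsub : E ⊆ Finset.Icc 1 n := by
    intro x hx
    rw [hE, Finset.mem_biUnion] at hx
    obtain ⟨p, hp, hxp⟩ := hx
    obtain ⟨b1, b2, b3⟩ := h.1 p hp
    rw [Finset.mem_insert, Finset.mem_singleton] at hxp
    rw [Finset.mem_Icc]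
    rcases hxp with rfl | rfl
    · exact ⟨b1, by omega⟩
    · exact ⟨by omega, b3⟩
  have hEcard : E.card = 2 * τ.card := by
    rw [hE, Finset.card_biUnion]
    · rw [Finset.sum_congr rfl (fun p hp => ?_), Finset.sum_const, smul_eq_mul,
        Nat.mul_comm]
      have : p.1 ≠ p.2 := by have := h.1 p hp; omega
      rw [Finset.card_insert_of_notMem (by simpa using this), Finset.card_singleton]
    · intro p hp q hq hne
      have hd := h.2 p hp q hq hne
      rw [Function.onFun, Finset.disjoint_left]
      intro x hx1 hx2
      rw [Finset.mem_insert, Finset.mem_singleton] at hx1 hx2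
      rcases hx1 with rfl | rfl <;> rcases hx2 with e | e <;> tauto
  rw [hfix, Finset.card_sdiff_of_subset hEsub, Nat.card_Icc, hEcard]
  omega

lemma RInt_insert {τ : Finset (ℕ × ℕ)} {p : ℕ × ℕ} (hp : p ∉ τ) (a b : ℕ) :
    RInt (insert p τ) a b = (if a ≤ p.1 ∧ p.2 ≤ b then 1 else 0) + RInt τ a b := by
  unfold RInt
  rw [Finset.filter_insert]
  split_ifs with h
  · rw [Finset.card_insert_of_notMem (fun hc => hp (Finset.mem_of_mem_filter _ hc))]
    omega
  · omega

lemma crossings_extract_zero {n i : ℕ} {τ : Finset (ℕ × ℕ)} (h : IsLinkPattern n τ)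
    (hg : Good i τ) (hc : crossings τ = 0) : crossings (extract i τ) = 0 := by
  unfold crossings at *
  rw [Finset.card_eq_zero, Finset.filter_eq_empty_iff] at *
  rintro ⟨⟨u, v⟩, ⟨u', v'⟩⟩ hmem
  rw [Finset.mem_product] at hmem
  obtain ⟨hm1, hm2⟩ := hmem
  rw [mem_extract hg] at hm1 hm2
  have := hc (x := ((phi i u, phi i v), (phi i u', phi i v')))
    (Finset.mem_product.mpr ⟨hm1, hm2⟩)
  simp only [not_and] at this ⊢
  intro c1 c2 c3
  exact this (phi_lt_iff.mpr c1) (phi_lt_iff.mpr c2) (phi_lt_iff.mpr c3)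

lemma bridges_extract_zero {n i : ℕ} {τ : Finset (ℕ × ℕ)} (h : IsLinkPattern n τ)
    (hg : Good i τ) (hb : bridges n τ = 0) : bridges (n - 2) (extract i τ) = 0 := by
  unfold bridges at *
  rw [Finset.card_eq_zero, Finset.filter_eq_empty_iff] at *
  rintro ⟨⟨u, v⟩, f⟩ hmem
  rw [Finset.mem_product] at hmem
  obtain ⟨hm1, hm2⟩ := hmem
  rw [mem_extract hg] at hm1
  rw [mem_fixed_extract h hg] at hm2
  have := hb (x := ((phi i u, phi i v), phi i f))
    (Finset.mem_product.mpr ⟨hm1, hm2⟩)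
  simp only [not_and] at this ⊢
  intro c1 c2
  exact this (phi_lt_iff.mpr c1) (phi_lt_iff.mpr c2)

lemma pNum_extract {n k i : ℕ} {σ : Finset (ℕ × ℕ)} (hk : 1 ≤ k) (hkn : 2 * k ≤ n)
    (hb : bridges n σ = 0) (hc : crossings σ = 0)
    (hb' : bridges (n - 2) (extract i σ) = 0) (hc' : crossings (extract i σ) = 0) :
    pNum n k σ = pNum (n - 2) (k - 1) (extract i σ) + (n - k - 1) := by
  unfold pNum
  rw [hb, hc, hb', hc']
  have h1 : n - k = (n - k - 1) + 1 := by omega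
  have h2 : n - 2 - (k - 1) = n - k - 1 := by omega
  have h3 : n - 2 - 2 * (k - 1) = n - 2 * k := by omega
  rw [h1, h2, h3, Nat.choose_succ_succ]
  have h4 : (n - 2 * k).choose 2 ≤ (n - k - 1).choose 2 :=
    Nat.choose_le_choose 2 (by omega)
  rw [Nat.choose_one_right]
  set A := (n - k - 1).choose 2
  set B := (n - 2 * k).choose 2
  omega

/-- Index set for the extra neighbors: fixed points of `υ` (tagged with 0) and
arcs of `υ` other than `(i,i+1)`. -/
noncomputable def cS (n i : ℕ) (υ : Finset (ℕ × ℕ)) : Finset (ℕ × ℕ) :=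
  (fixedPts n υ).image (fun f => (f, 0)) ∪ υ.erase (i, i + 1)

/-- The candidate neighbor of `υ` indexed by `w ∈ cS n i υ`. -/
noncomputable def cnd (i : ℕ) (υ : Finset (ℕ × ℕ)) (w : ℕ × ℕ) : Finset (ℕ × ℕ) :=
  if w.2 = 0 then
    (if w.1 < i then insert (w.1, i + 1) (υ.erase (i, i + 1))
     else insert (i, w.1) (υ.erase (i, i + 1)))
  else if w.2 < i then
    insert (w.1, i) (insert (w.2, i + 1) ((υ.erase (i, i + 1)).erase w))
  else if i + 1 < w.1 then
    insert (i, w.1) (insert (i + 1, w.2) ((υ.erase (i, i + 1)).erase w))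
  else
    insert (w.1, i + 1) (insert (i, w.2) ((υ.erase (i, i + 1)).erase w))

lemma mem_fixedPts_iff {n : ℕ} {τ : Finset (ℕ × ℕ)} {f : ℕ} :
    f ∈ fixedPts n τ ↔ (1 ≤ f ∧ f ≤ n) ∧ ∀ p ∈ τ, p.1 ≠ f ∧ p.2 ≠ f := by
  unfold fixedPts
  rw [Finset.mem_filter, Finset.mem_Icc]

lemma cnd_spec {n i : ℕ} {υ : Finset (ℕ × ℕ)} (hυ : IsLinkPattern n υ)
    (hgυ : Good i υ) {w : ℕ × ℕ} (hw : w ∈ cS n i υ) :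
    IsLinkPattern n (cnd i υ w) ∧ (cnd i υ w).card = υ.card ∧
    (∀ a b : ℕ, RInt (cnd i υ w) a b ≤ RInt υ a b) ∧
    IsPredecessor n υ (cnd i υ w) ∧ (i, i + 1) ∉ cnd i υ w := by
  obtain ⟨hi1, hin⟩ := pair_mem_bounds hυ hgυ.1
  have hs0 : ((i : ℕ), i + 1) ∉ υ.erase (i, i + 1) := Finset.notMem_erase _ _
  have hins : insert ((i : ℕ), i + 1) (υ.erase (i, i + 1)) = υ :=
    Finset.insert_erase hgυ.1
  have havd : ∀ p ∈ υ.erase ((i : ℕ), i + 1),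
      p.1 ≠ i ∧ p.1 ≠ i + 1 ∧ p.2 ≠ i ∧ p.2 ≠ i + 1 := fun p hp =>
    hgυ.2 p (Finset.mem_of_mem_erase hp) ((Finset.mem_erase.mp hp).1)
  rcases Finset.mem_union.mp hw with hfix | harc
  · -- fixed point case
    obtain ⟨f, hf, rfl⟩ := Finset.mem_image.mp hfix
    obtain ⟨hfi, hfi1⟩ := fix_ne hgυ hf
    obtain ⟨⟨hf1, hfn⟩, hffree⟩ := mem_fixedPts_iff.mp hf
    by_cases hflt : f < i
    · -- new arc (f, i+1)
      have hval : cnd i υ (f, 0) = insert (f, i + 1) (υ.erase (i, i + 1)) := by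
        unfold cnd; simp [hflt]
      have hnotmem : ((f : ℕ), i + 1) ∉ υ.erase (i, i + 1) := fun hc =>
        (havd _ hc).2.2.2 rfl
      rw [hval]
      refine ⟨?_, ?_, ?_, ?_, ?_⟩
      · constructor
        · intro p hp
          rcases Finset.mem_insert.mp hp with rfl | hm
          · exact ⟨by omega, by omega, by omega⟩
          · exact hυ.1 p (Finset.mem_of_mem_erase hm)
        · intro p hp q hq hne
          rcases Finset.mem_insert.mp hp with rfl | hmp
          · rcases Finset.mem_insert.mp hq with rfl | hmq
            · exact absurd rfl hne
            · obtain ⟨a1, a2, a3, a4⟩ := havd q hmq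
              have hq' := hffree q (Finset.mem_of_mem_erase hmq)
              refine ⟨?_, ?_, ?_, ?_⟩ <;> simp only [] <;> omega
          · rcases Finset.mem_insert.mp hq with rfl | hmq
            · obtain ⟨a1, a2, a3, a4⟩ := havd p hmp
              have hp' := hffree p (Finset.mem_of_mem_erase hmp)
              refine ⟨?_, ?_, ?_, ?_⟩ <;> simp only [] <;> omega
            · exact hυ.2 p (Finset.mem_of_mem_erase hmp) q (Finset.mem_of_mem_erase hmq) hne
      · rw [Finset.card_insert_of_notMem hnotmem, Finset.card_erase_of_mem hgυ.1]
        have : 1 ≤ υ.card := Finset.card_pos.mpr ⟨_, hgυ.1⟩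
        omega
      · intro a b
        conv_rhs => rw [← hins]
        rw [RInt_insert hnotmem, RInt_insert hs0]
        simp only []
        split_ifs <;> omega
      · refine Or.inl ⟨f, i + 1, i, Finset.mem_insert_self _ _, ?_, by omega, by omega, ?_⟩
        · rw [mem_fixedPts_iff]
          refine ⟨⟨by omega, by omega⟩, ?_⟩
          intro p hp
          rcases Finset.mem_insert.mp hp with rfl | hm
          · exact ⟨by omega, by omega⟩
          · obtain ⟨a1, _, a3, _⟩ := havd p hm
            exact ⟨a1, a3⟩
        · right
          rw [Finset.erase_insert hnotmem]
          exact hins.symm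
      · intro hc
        rcases Finset.mem_insert.mp hc with he | hm
        · rw [Prod.mk.injEq] at he; omega
        · exact hs0 hm
    · -- new arc (i, f), f > i+1
      have hfgt : i + 1 < f := by omega
      have hval : cnd i υ (f, 0) = insert (i, f) (υ.erase (i, i + 1)) := by
        unfold cnd; simp [hflt]
      have hnotmem : ((i : ℕ), f) ∉ υ.erase (i, i + 1) := fun hc =>
        (havd _ hc).1 rfl
      rw [hval]
      refine ⟨?_, ?_, ?_, ?_, ?_⟩
      · constructor
        · intro p hp
          rcases Finset.mem_insert.mp hp with rfl | hm
          · exact ⟨by omega, by omega, by omega⟩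
          · exact hυ.1 p (Finset.mem_of_mem_erase hm)
        · intro p hp q hq hne
          rcases Finset.mem_insert.mp hp with rfl | hmp
          · rcases Finset.mem_insert.mp hq with rfl | hmq
            · exact absurd rfl hne
            · obtain ⟨a1, a2, a3, a4⟩ := havd q hmq
              have hq' := hffree q (Finset.mem_of_mem_erase hmq)
              refine ⟨?_, ?_, ?_, ?_⟩ <;> simp only [] <;> omega
          · rcases Finset.mem_insert.mp hq with rfl | hmq
            · obtain ⟨a1, a2, a3, a4⟩ := havd p hmp
              have hp' := hffree p (Finset.mem_of_mem_erase hmp)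
              refine ⟨?_, ?_, ?_, ?_⟩ <;> simp only [] <;> omega
            · exact hυ.2 p (Finset.mem_of_mem_erase hmp) q (Finset.mem_of_mem_erase hmq) hne
      · rw [Finset.card_insert_of_notMem hnotmem, Finset.card_erase_of_mem hgυ.1]
        have : 1 ≤ υ.card := Finset.card_pos.mpr ⟨_, hgυ.1⟩
        omega
      · intro a b
        conv_rhs => rw [← hins]
        rw [RInt_insert hnotmem, RInt_insert hs0]
        simp only []
        split_ifs <;> omega
      · refine Or.inl ⟨i, f, i + 1, Finset.mem_insert_self _ _, ?_, by omega, by omega, ?_⟩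
        · rw [mem_fixedPts_iff]
          refine ⟨⟨by omega, by omega⟩, ?_⟩
          intro p hp
          rcases Finset.mem_insert.mp hp with rfl | hm
          · exact ⟨by omega, by omega⟩
          · obtain ⟨_, a2, _, a4⟩ := havd p hm
            exact ⟨a2, a4⟩
        · left
          rw [Finset.erase_insert hnotmem]
          exact hins.symm
      · intro hc
        rcases Finset.mem_insert.mp hc with he | hm
        · rw [Prod.mk.injEq] at he; omega
        · exact hs0 hm
  · -- arc case
    obtain ⟨x, y⟩ := w
    have hwmem : ((x : ℕ), y) ∈ υ := Finset.mem_of_mem_erase harc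
    have hwne : ((x : ℕ), y) ≠ (i, i + 1) := (Finset.mem_erase.mp harc).1
    obtain ⟨hx1, hxy, hyn⟩ := hυ.1 _ hwmem
    obtain ⟨ax1, ax2, ay1, ay2⟩ := havd _ harc
    simp only [] at hx1 hxy hyn ax1 ax2 ay1 ay2
    have hy0 : ¬ ((x : ℕ), y).2 = 0 := by simp only []; omega
    have hts : insert ((x : ℕ), y) ((υ.erase (i, i + 1)).erase (x, y)) = υ.erase (i, i + 1) :=
      Finset.insert_erase harc
    have htmem : ∀ p ∈ (υ.erase ((i : ℕ), i + 1)).erase (x, y),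
        p ∈ υ ∧ p ≠ (i, i + 1) ∧ p ≠ (x, y) := fun p hp =>
      ⟨Finset.mem_of_mem_erase (Finset.mem_of_mem_erase hp),
       (Finset.mem_erase.mp (Finset.mem_of_mem_erase hp)).1,
       (Finset.mem_erase.mp hp).1⟩
    have htavd : ∀ p ∈ (υ.erase ((i : ℕ), i + 1)).erase (x, y),
        p.1 ≠ i ∧ p.1 ≠ i + 1 ∧ p.2 ≠ i ∧ p.2 ≠ i + 1 := fun p hp =>
      havd p (Finset.mem_of_mem_erase hp)
    have htdisj : ∀ p ∈ (υ.erase ((i : ℕ), i + 1)).erase (x, y),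
        p.1 ≠ x ∧ p.1 ≠ y ∧ p.2 ≠ x ∧ p.2 ≠ y := fun p hp =>
      hυ.2 p (htmem p hp).1 (x, y) hwmem (htmem p hp).2.2
    have hcard1 : (υ.erase ((i : ℕ), i + 1)).card = υ.card - 1 :=
      Finset.card_erase_of_mem hgυ.1
    have hcard2 : ((υ.erase ((i : ℕ), i + 1)).erase (x, y)).card = υ.card - 2 := by
      rw [Finset.card_erase_of_mem harc, hcard1]
      omega
    have hcards : 1 ≤ (υ.erase ((i : ℕ), i + 1)).card := Finset.card_pos.mpr ⟨_, harc⟩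
    have hucard : 2 ≤ υ.card := by omega
    set t := (υ.erase ((i : ℕ), i + 1)).erase (x, y) with ht
    have hnmxy : ((x : ℕ), y) ∉ t := by rw [ht]; exact Finset.notMem_erase _ _
    by_cases hyi : y < i
    · -- branch L : both endpoints left of i
      have hval : cnd i υ (x, y) = insert (x, i) (insert (y, i + 1) t) := by
        unfold cnd; rw [ht]; simp [show ¬ y = 0 by omega, hyi]
      have hnm2 : ((y : ℕ), i + 1) ∉ t := fun hc => (htavd _ hc).2.2.2 rfl
      have hnm1 : ((x : ℕ), i) ∉ insert ((y : ℕ), i + 1) t := by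
        intro hc
        rcases Finset.mem_insert.mp hc with he | hm
        · rw [Prod.mk.injEq] at he; omega
        · exact (htavd _ hm).2.2.1 rfl
      rw [hval]
      refine ⟨?_, ?_, ?_, ?_, ?_⟩
      · constructor
        · intro p hp
          rcases Finset.mem_insert.mp hp with rfl | hp
          · exact ⟨by omega, by omega, by omega⟩
          rcases Finset.mem_insert.mp hp with rfl | hp
          · exact ⟨by omega, by omega, by omega⟩
          · exact hυ.1 p (htmem p hp).1
        · intro p hp q hq hne
          rcases Finset.mem_insert.mp hp with rfl | hp
          · rcases Finset.mem_insert.mp hq with rfl | hq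
            · exact absurd rfl hne
            rcases Finset.mem_insert.mp hq with rfl | hq
            · refine ⟨?_, ?_, ?_, ?_⟩ <;> simp only [] <;> omega
            · obtain ⟨b1, b2, b3, b4⟩ := htavd q hq
              obtain ⟨c1, c2, c3, c4⟩ := htdisj q hq
              refine ⟨?_, ?_, ?_, ?_⟩ <;> simp only [] <;> omega
          rcases Finset.mem_insert.mp hp with rfl | hp
          · rcases Finset.mem_insert.mp hq with rfl | hq
            · refine ⟨?_, ?_, ?_, ?_⟩ <;> simp only [] <;> omega
            rcases Finset.mem_insert.mp hq with rfl | hq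
            · exact absurd rfl hne
            · obtain ⟨b1, b2, b3, b4⟩ := htavd q hq
              obtain ⟨c1, c2, c3, c4⟩ := htdisj q hq
              refine ⟨?_, ?_, ?_, ?_⟩ <;> simp only [] <;> omega
          · rcases Finset.mem_insert.mp hq with rfl | hq
            · obtain ⟨b1, b2, b3, b4⟩ := htavd p hp
              obtain ⟨c1, c2, c3, c4⟩ := htdisj p hp
              refine ⟨?_, ?_, ?_, ?_⟩ <;> simp only [] <;> omega
            rcases Finset.mem_insert.mp hq with rfl | hq
            · obtain ⟨b1, b2, b3, b4⟩ := htavd p hp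
              obtain ⟨c1, c2, c3, c4⟩ := htdisj p hp
              refine ⟨?_, ?_, ?_, ?_⟩ <;> simp only [] <;> omega
            · exact hυ.2 p (htmem p hp).1 q (htmem q hq).1 hne
      · rw [Finset.card_insert_of_notMem hnm1, Finset.card_insert_of_notMem hnm2, hcard2]
        omega
      · intro a b
        conv_rhs => rw [← hins, ← hts]
        rw [RInt_insert hnm1, RInt_insert hnm2,
          RInt_insert (by rw [hts]; exact hs0), RInt_insert hnmxy]
        simp only []
        split_ifs <;> omega
      · refine Or.inr ⟨x, i, y, i + 1, Finset.mem_insert_self _ _,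
          Finset.mem_insert_of_mem (Finset.mem_insert_self _ _), hxy, hyi, by omega, ?_⟩
        left
        rw [Finset.erase_insert hnm1, Finset.erase_insert hnm2, ← hins, ← hts,
          Finset.insert_comm]
      · intro hc
        rcases Finset.mem_insert.mp hc with he | hc
        · rw [Prod.mk.injEq] at he; omega
        rcases Finset.mem_insert.mp hc with he | hc
        · rw [Prod.mk.injEq] at he; omega
        · exact (htavd _ hc).1 rfl
    · by_cases hxi : i + 1 < x
      · -- branch R : both endpoints right of i+1
        have hval : cnd i υ (x, y) = insert (i, x) (insert (i + 1, y) t) := by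
          unfold cnd; rw [ht]; simp [show ¬ y = 0 by omega, hyi, hxi]
        have hnm2 : ((i : ℕ) + 1, y) ∉ t := fun hc => (htavd _ hc).2.1 rfl
        have hnm1 : ((i : ℕ), x) ∉ insert ((i : ℕ) + 1, y) t := by
          intro hc
          rcases Finset.mem_insert.mp hc with he | hm
          · rw [Prod.mk.injEq] at he; omega
          · exact (htavd _ hm).1 rfl
        rw [hval]
        refine ⟨?_, ?_, ?_, ?_, ?_⟩
        · constructor
          · intro p hp
            rcases Finset.mem_insert.mp hp with rfl | hp
            · exact ⟨by omega, by omega, by omega⟩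
            rcases Finset.mem_insert.mp hp with rfl | hp
            · exact ⟨by omega, by omega, by omega⟩
            · exact hυ.1 p (htmem p hp).1
          · intro p hp q hq hne
            rcases Finset.mem_insert.mp hp with rfl | hp
            · rcases Finset.mem_insert.mp hq with rfl | hq
              · exact absurd rfl hne
              rcases Finset.mem_insert.mp hq with rfl | hq
              · refine ⟨?_, ?_, ?_, ?_⟩ <;> simp only [] <;> omega
              · obtain ⟨b1, b2, b3, b4⟩ := htavd q hq
                obtain ⟨c1, c2, c3, c4⟩ := htdisj q hq
                refine ⟨?_, ?_, ?_, ?_⟩ <;> simp only [] <;> omega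
            rcases Finset.mem_insert.mp hp with rfl | hp
            · rcases Finset.mem_insert.mp hq with rfl | hq
              · refine ⟨?_, ?_, ?_, ?_⟩ <;> simp only [] <;> omega
              rcases Finset.mem_insert.mp hq with rfl | hq
              · exact absurd rfl hne
              · obtain ⟨b1, b2, b3, b4⟩ := htavd q hq
                obtain ⟨c1, c2, c3, c4⟩ := htdisj q hq
                refine ⟨?_, ?_, ?_, ?_⟩ <;> simp only [] <;> omega
            · rcases Finset.mem_insert.mp hq with rfl | hq
              · obtain ⟨b1, b2, b3, b4⟩ := htavd p hp
                obtain ⟨c1, c2, c3, c4⟩ := htdisj p hp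
                refine ⟨?_, ?_, ?_, ?_⟩ <;> simp only [] <;> omega
              rcases Finset.mem_insert.mp hq with rfl | hq
              · obtain ⟨b1, b2, b3, b4⟩ := htavd p hp
                obtain ⟨c1, c2, c3, c4⟩ := htdisj p hp
                refine ⟨?_, ?_, ?_, ?_⟩ <;> simp only [] <;> omega
              · exact hυ.2 p (htmem p hp).1 q (htmem q hq).1 hne
        · rw [Finset.card_insert_of_notMem hnm1, Finset.card_insert_of_notMem hnm2, hcard2]
          omega
        · intro a b
          conv_rhs => rw [← hins, ← hts]
          rw [RInt_insert hnm1, RInt_insert hnm2,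
            RInt_insert (by rw [hts]; exact hs0), RInt_insert hnmxy]
          simp only []
          split_ifs <;> omega
        · refine Or.inr ⟨i, x, i + 1, y, Finset.mem_insert_self _ _,
            Finset.mem_insert_of_mem (Finset.mem_insert_self _ _), by omega, hxi, hxy, ?_⟩
          left
          rw [Finset.erase_insert hnm1, Finset.erase_insert hnm2, ← hins, ← hts]
        · intro hc
          rcases Finset.mem_insert.mp hc with he | hc
          · rw [Prod.mk.injEq] at he; omega
          rcases Finset.mem_insert.mp hc with he | hc
          · rw [Prod.mk.injEq] at he; omega
          · exact (htavd _ hc).1 rfl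
      · -- branch O : arc spanning over (i, i+1)
        have hxlt : x < i := by omega
        have hygt : i + 1 < y := by omega
        have hval : cnd i υ (x, y) = insert (x, i + 1) (insert (i, y) t) := by
          unfold cnd; rw [ht]; simp [show ¬ y = 0 by omega, hyi, hxi]
        have hnm2 : ((i : ℕ), y) ∉ t := fun hc => (htavd _ hc).1 rfl
        have hnm1 : ((x : ℕ), i + 1) ∉ insert ((i : ℕ), y) t := by
          intro hc
          rcases Finset.mem_insert.mp hc with he | hm
          · rw [Prod.mk.injEq] at he; omega
          · exact (htavd _ hm).2.2.2 rfl
        rw [hval]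
        refine ⟨?_, ?_, ?_, ?_, ?_⟩
        · constructor
          · intro p hp
            rcases Finset.mem_insert.mp hp with rfl | hp
            · exact ⟨by omega, by omega, by omega⟩
            rcases Finset.mem_insert.mp hp with rfl | hp
            · exact ⟨by omega, by omega, by omega⟩
            · exact hυ.1 p (htmem p hp).1
          · intro p hp q hq hne
            rcases Finset.mem_insert.mp hp with rfl | hp
            · rcases Finset.mem_insert.mp hq with rfl | hq
              · exact absurd rfl hne
              rcases Finset.mem_insert.mp hq with rfl | hq
              · refine ⟨?_, ?_, ?_, ?_⟩ <;> simp only [] <;> omega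
              · obtain ⟨b1, b2, b3, b4⟩ := htavd q hq
                obtain ⟨c1, c2, c3, c4⟩ := htdisj q hq
                refine ⟨?_, ?_, ?_, ?_⟩ <;> simp only [] <;> omega
            rcases Finset.mem_insert.mp hp with rfl | hp
            · rcases Finset.mem_insert.mp hq with rfl | hq
              · refine ⟨?_, ?_, ?_, ?_⟩ <;> simp only [] <;> omega
              rcases Finset.mem_insert.mp hq with rfl | hq
              · exact absurd rfl hne
              · obtain ⟨b1, b2, b3, b4⟩ := htavd q hq
                obtain ⟨c1, c2, c3, c4⟩ := htdisj q hq
                refine ⟨?_, ?_, ?_, ?_⟩ <;> simp only [] <;> omega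
            · rcases Finset.mem_insert.mp hq with rfl | hq
              · obtain ⟨b1, b2, b3, b4⟩ := htavd p hp
                obtain ⟨c1, c2, c3, c4⟩ := htdisj p hp
                refine ⟨?_, ?_, ?_, ?_⟩ <;> simp only [] <;> omega
              rcases Finset.mem_insert.mp hq with rfl | hq
              · obtain ⟨b1, b2, b3, b4⟩ := htavd p hp
                obtain ⟨c1, c2, c3, c4⟩ := htdisj p hp
                refine ⟨?_, ?_, ?_, ?_⟩ <;> simp only [] <;> omega
              · exact hυ.2 p (htmem p hp).1 q (htmem q hq).1 hne
        · rw [Finset.card_insert_of_notMem hnm1, Finset.card_insert_of_notMem hnm2, hcard2]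
          omega
        · intro a b
          conv_rhs => rw [← hins, ← hts]
          rw [RInt_insert hnm1, RInt_insert hnm2,
            RInt_insert (by rw [hts]; exact hs0), RInt_insert hnmxy]
          simp only []
          split_ifs <;> omega
        · refine Or.inr ⟨x, i + 1, i, y, Finset.mem_insert_self _ _,
            Finset.mem_insert_of_mem (Finset.mem_insert_self _ _), hxlt, by omega, hygt, ?_⟩
          right
          rw [Finset.erase_insert hnm1, Finset.erase_insert hnm2, ← hins, ← hts,
            Finset.insert_comm]
        · intro hc
          rcases Finset.mem_insert.mp hc with he | hc
          · rw [Prod.mk.injEq] at he; omega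
          rcases Finset.mem_insert.mp hc with he | hc
          · rw [Prod.mk.injEq] at he; omega
          · exact (htavd _ hc).1 rfl

lemma cnd_fix_ne_arc {n i : ℕ} {υ : Finset (ℕ × ℕ)} (hυ : IsLinkPattern n υ)
    (hgυ : Good i υ) {w1 w2 : ℕ × ℕ} (hz : w1.2 = 0) (hf : w1.1 ∈ fixedPts n υ)
    (ha : w2 ∈ υ.erase (i, i + 1)) : cnd i υ w1 ≠ cnd i υ w2 := by
  obtain ⟨hi1, hin⟩ := pair_mem_bounds hυ hgυ.1
  have havd : ∀ p ∈ υ.erase ((i : ℕ), i + 1),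
      p.1 ≠ i ∧ p.1 ≠ i + 1 ∧ p.2 ≠ i ∧ p.2 ≠ i + 1 := fun p hp =>
    hgυ.2 p (Finset.mem_of_mem_erase hp) ((Finset.mem_erase.mp hp).1)
  obtain ⟨f, z⟩ := w1; obtain ⟨x, y⟩ := w2
  simp only [] at hz hf; subst hz
  obtain ⟨hfi, hfi1⟩ := fix_ne hgυ hf
  obtain ⟨a1, a2, a3, a4⟩ := havd _ ha
  obtain ⟨hx1, hxy, hyn⟩ := hυ.1 _ (Finset.mem_of_mem_erase ha)
  simp only [] at a1 a2 a3 a4 hx1 hxy hyn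
  intro heq
  have hval1lt : f < i → cnd i υ (f, 0) = insert (f, i + 1) (υ.erase (i, i + 1)) := by
    intro h; unfold cnd; simp [h]
  have hval1ge : ¬ f < i → cnd i υ (f, 0) = insert (i, f) (υ.erase (i, i + 1)) := by
    intro h; unfold cnd; simp [h]
  by_cases hyi : y < i
  · -- arc branch L, probe (x, i)
    have hm : ((x : ℕ), i) ∈ cnd i υ (x, y) := by
      unfold cnd; simp [show ¬ y = 0 by omega, hyi]
    rw [← heq] at hm
    by_cases hflt : f < i
    · rw [hval1lt hflt] at hm
      rcases Finset.mem_insert.mp hm with he | he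
      · rw [Prod.mk.injEq] at he; omega
      · exact (havd _ he).2.2.1 rfl
    · rw [hval1ge hflt] at hm
      rcases Finset.mem_insert.mp hm with he | he
      · rw [Prod.mk.injEq] at he; omega
      · exact (havd _ he).2.2.1 rfl
  · by_cases hxi : i + 1 < x
    · -- arc branch R, probe (i+1, y)
      have hm : ((i : ℕ) + 1, y) ∈ cnd i υ (x, y) := by
        unfold cnd
        simp only [show ¬ ((x : ℕ), y).2 = 0 by simp only []; omega, if_neg,
          show ¬ ((x : ℕ), y).2 < i by simp only []; omega,
          show i + 1 < ((x : ℕ), y).1 from hxi, if_pos, if_true, ite_false, ite_true]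
        exact Finset.mem_insert_of_mem (Finset.mem_insert_self _ _)
      rw [← heq] at hm
      by_cases hflt : f < i
      · rw [hval1lt hflt] at hm
        rcases Finset.mem_insert.mp hm with he | he
        · rw [Prod.mk.injEq] at he; omega
        · exact (havd _ he).2.1 rfl
      · rw [hval1ge hflt] at hm
        rcases Finset.mem_insert.mp hm with he | he
        · rw [Prod.mk.injEq] at he; omega
        · exact (havd _ he).2.1 rfl
    · -- arc branch O
      have hxlt : x < i := by omega
      have hygt : i + 1 < y := by omega
      have hvalO : cnd i υ (x, y) = insert (x, i + 1)
          (insert (i, y) ((υ.erase (i, i + 1)).erase (x, y))) := by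
        unfold cnd; simp [show ¬ y = 0 by omega, hyi, hxi]
      by_cases hflt : f < i
      · -- probe (i, y)
        have hm : ((i : ℕ), y) ∈ cnd i υ (x, y) := by
          rw [hvalO]; exact Finset.mem_insert_of_mem (Finset.mem_insert_self _ _)
        rw [← heq, hval1lt hflt] at hm
        rcases Finset.mem_insert.mp hm with he | he
        · rw [Prod.mk.injEq] at he; omega
        · exact (havd _ he).1 rfl
      · -- probe (x, i+1)
        have hm : ((x : ℕ), i + 1) ∈ cnd i υ (x, y) := by
          rw [hvalO]; exact Finset.mem_insert_self _ _
        rw [← heq, hval1ge hflt] at hm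
        rcases Finset.mem_insert.mp hm with he | he
        · rw [Prod.mk.injEq] at he; omega
        · exact (havd _ he).2.2.2 rfl

lemma cnd_inj {n i : ℕ} {υ : Finset (ℕ × ℕ)} (hυ : IsLinkPattern n υ)
    (hgυ : Good i υ) : ∀ w1 ∈ cS n i υ, ∀ w2 ∈ cS n i υ,
      cnd i υ w1 = cnd i υ w2 → w1 = w2 := by
  obtain ⟨hi1, hin⟩ := pair_mem_bounds hυ hgυ.1
  have havd : ∀ p ∈ υ.erase ((i : ℕ), i + 1),
      p.1 ≠ i ∧ p.1 ≠ i + 1 ∧ p.2 ≠ i ∧ p.2 ≠ i + 1 := fun p hp =>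
    hgυ.2 p (Finset.mem_of_mem_erase hp) ((Finset.mem_erase.mp hp).1)
  have havd2 : ∀ (z : ℕ × ℕ), ∀ p ∈ (υ.erase ((i : ℕ), i + 1)).erase z,
      p.1 ≠ i ∧ p.1 ≠ i + 1 ∧ p.2 ≠ i ∧ p.2 ≠ i + 1 := fun z p hp =>
    havd p (Finset.mem_of_mem_erase hp)
  have hform : ∀ w ∈ cS n i υ, (w.2 = 0 ∧ w.1 ∈ fixedPts n υ) ∨ w ∈ υ.erase (i, i + 1) := by
    intro w hw
    rcases Finset.mem_union.mp hw with hfix | harc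
    · obtain ⟨f, hf, rfl⟩ := Finset.mem_image.mp hfix
      exact Or.inl ⟨rfl, hf⟩
    · exact Or.inr harc
  intro w1 hw1 w2 hw2 heq
  rcases hform w1 hw1 with ⟨hz1, hf1⟩ | ha1 <;> rcases hform w2 hw2 with ⟨hz2, hf2⟩ | ha2
  · -- fix vs fix
    obtain ⟨f, z⟩ := w1; obtain ⟨g, z'⟩ := w2
    simp only [] at hz1 hz2 hf1 hf2; subst hz1; subst hz2
    obtain ⟨hfi, hfi1⟩ := fix_ne hgυ hf1
    obtain ⟨hgi, hgi1⟩ := fix_ne hgυ hf2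
    unfold cnd at heq
    by_cases h1 : f < i <;> by_cases h2 : g < i <;> simp [h1, h2] at heq
    · have hm : ((f : ℕ), i + 1) ∈ insert ((g : ℕ), i + 1) (υ.erase (i, i + 1)) := by
        rw [← heq]; exact Finset.mem_insert_self _ _
      rcases Finset.mem_insert.mp hm with he | he
      · rw [Prod.mk.injEq] at he; rw [he.1]
      · exact absurd rfl (havd _ he).2.2.2
    · have hm : ((f : ℕ), i + 1) ∈ insert ((i : ℕ), g) (υ.erase (i, i + 1)) := by
        rw [← heq]; exact Finset.mem_insert_self _ _
      rcases Finset.mem_insert.mp hm with he | he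
      · rw [Prod.mk.injEq] at he; omega
      · exact absurd rfl (havd _ he).2.2.2
    · have hm : ((i : ℕ), f) ∈ insert ((g : ℕ), i + 1) (υ.erase (i, i + 1)) := by
        rw [← heq]; exact Finset.mem_insert_self _ _
      rcases Finset.mem_insert.mp hm with he | he
      · rw [Prod.mk.injEq] at he; omega
      · exact absurd rfl (havd _ he).1
    · have hm : ((i : ℕ), f) ∈ insert ((i : ℕ), g) (υ.erase (i, i + 1)) := by
        rw [← heq]; exact Finset.mem_insert_self _ _
      rcases Finset.mem_insert.mp hm with he | he
      · rw [Prod.mk.injEq] at he; rw [he.2]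
      · exact absurd rfl (havd _ he).1
  · exact absurd heq (cnd_fix_ne_arc hυ hgυ hz1 hf1 ha2)
  · exact absurd heq.symm (cnd_fix_ne_arc hυ hgυ hz2 hf2 ha1)
  · -- arc vs arc
    obtain ⟨x1, y1⟩ := w1; obtain ⟨x2, y2⟩ := w2
    obtain ⟨a1, a2, a3, a4⟩ := havd _ ha1
    obtain ⟨b1, b2, b3, b4⟩ := havd _ ha2
    obtain ⟨hx11, hxy1, hy1n⟩ := hυ.1 _ (Finset.mem_of_mem_erase ha1)
    obtain ⟨hx21, hxy2, hy2n⟩ := hυ.1 _ (Finset.mem_of_mem_erase ha2)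
    simp only [] at a1 a2 a3 a4 b1 b2 b3 b4 hx11 hxy1 hy1n hx21 hxy2 hy2n
    unfold cnd at heq
    by_cases hc1 : y1 < i <;> by_cases hc2 : y2 < i <;>
      by_cases hd1 : i + 1 < x1 <;> by_cases hd2 : i + 1 < x2
    all_goals simp [show ¬ y1 = 0 by omega, show ¬ y2 = 0 by omega,
      hc1, hc2, hd1, hd2] at heq
    all_goals first
    | (exfalso; omega)
    | skip
    · -- L vs L
      have hm1 : ((x1 : ℕ), i) ∈ insert ((x2 : ℕ), i)
          (insert ((y2 : ℕ), i + 1) ((υ.erase (i, i + 1)).erase (x2, y2))) := by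
        rw [← heq]; exact Finset.mem_insert_self _ _
      have hm2 : ((y1 : ℕ), i + 1) ∈ insert ((x2 : ℕ), i)
          (insert ((y2 : ℕ), i + 1) ((υ.erase (i, i + 1)).erase (x2, y2))) := by
        rw [← heq]; exact Finset.mem_insert_of_mem (Finset.mem_insert_self _ _)
      have e1 : x1 = x2 := by
        rcases Finset.mem_insert.mp hm1 with he | he
        · rw [Prod.mk.injEq] at he; exact he.1
        rcases Finset.mem_insert.mp he with he | he
        · rw [Prod.mk.injEq] at he; omega
        · exact absurd rfl (havd2 _ _ he).2.2.1
      have e2 : y1 = y2 := by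
        rcases Finset.mem_insert.mp hm2 with he | he
        · rw [Prod.mk.injEq] at he; omega
        rcases Finset.mem_insert.mp he with he | he
        · rw [Prod.mk.injEq] at he; exact he.1
        · exact absurd rfl (havd2 _ _ he).2.2.2
      rw [e1, e2]
    · -- L vs R
      exfalso
      have hm1 : ((x1 : ℕ), i) ∈ insert ((i : ℕ), x2)
          (insert ((i : ℕ) + 1, y2) ((υ.erase (i, i + 1)).erase (x2, y2))) := by
        rw [← heq]; exact Finset.mem_insert_self _ _
      rcases Finset.mem_insert.mp hm1 with he | he
      · rw [Prod.mk.injEq] at he; omega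
      rcases Finset.mem_insert.mp he with he | he
      · rw [Prod.mk.injEq] at he; omega
      · exact absurd rfl (havd2 _ _ he).2.2.1
    · -- L vs O
      exfalso
      have hm1 : ((x1 : ℕ), i) ∈ insert ((x2 : ℕ), i + 1)
          (insert ((i : ℕ), y2) ((υ.erase (i, i + 1)).erase (x2, y2))) := by
        rw [← heq]; exact Finset.mem_insert_self _ _
      rcases Finset.mem_insert.mp hm1 with he | he
      · rw [Prod.mk.injEq] at he; omega
      rcases Finset.mem_insert.mp he with he | he
      · rw [Prod.mk.injEq] at he; omega
      · exact absurd rfl (havd2 _ _ he).2.2.1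
    · -- R vs L
      exfalso
      have hm1 : ((i : ℕ), x1) ∈ insert ((x2 : ℕ), i)
          (insert ((y2 : ℕ), i + 1) ((υ.erase (i, i + 1)).erase (x2, y2))) := by
        rw [← heq]; exact Finset.mem_insert_self _ _
      rcases Finset.mem_insert.mp hm1 with he | he
      · rw [Prod.mk.injEq] at he; omega
      rcases Finset.mem_insert.mp he with he | he
      · rw [Prod.mk.injEq] at he; omega
      · exact absurd rfl (havd2 _ _ he).1
    · -- O vs L
      exfalso
      have hm1 : ((i : ℕ), y1) ∈ insert ((x2 : ℕ), i)
          (insert ((y2 : ℕ), i + 1) ((υ.erase (i, i + 1)).erase (x2, y2))) := by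
        rw [← heq]; exact Finset.mem_insert_of_mem (Finset.mem_insert_self _ _)
      rcases Finset.mem_insert.mp hm1 with he | he
      · rw [Prod.mk.injEq] at he; omega
      rcases Finset.mem_insert.mp he with he | he
      · rw [Prod.mk.injEq] at he; omega
      · exact absurd rfl (havd2 _ _ he).1
    · -- R vs R
      have hm1 : ((i : ℕ), x1) ∈ insert ((i : ℕ), x2)
          (insert ((i : ℕ) + 1, y2) ((υ.erase (i, i + 1)).erase (x2, y2))) := by
        rw [← heq]; exact Finset.mem_insert_self _ _
      have hm2 : ((i : ℕ) + 1, y1) ∈ insert ((i : ℕ), x2)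
          (insert ((i : ℕ) + 1, y2) ((υ.erase (i, i + 1)).erase (x2, y2))) := by
        rw [← heq]; exact Finset.mem_insert_of_mem (Finset.mem_insert_self _ _)
      have e1 : x1 = x2 := by
        rcases Finset.mem_insert.mp hm1 with he | he
        · rw [Prod.mk.injEq] at he; exact he.2
        rcases Finset.mem_insert.mp he with he | he
        · rw [Prod.mk.injEq] at he; omega
        · exact absurd rfl (havd2 _ _ he).1
      have e2 : y1 = y2 := by
        rcases Finset.mem_insert.mp hm2 with he | he
        · rw [Prod.mk.injEq] at he; omega
        rcases Finset.mem_insert.mp he with he | he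
        · rw [Prod.mk.injEq] at he; exact he.2
        · exact absurd rfl (havd2 _ _ he).2.1
      rw [e1, e2]
    · -- R vs O
      exfalso
      have hm1 : ((i : ℕ) + 1, y1) ∈ insert ((x2 : ℕ), i + 1)
          (insert ((i : ℕ), y2) ((υ.erase (i, i + 1)).erase (x2, y2))) := by
        rw [← heq]; exact Finset.mem_insert_of_mem (Finset.mem_insert_self _ _)
      rcases Finset.mem_insert.mp hm1 with he | he
      · rw [Prod.mk.injEq] at he; omega
      rcases Finset.mem_insert.mp he with he | he
      · rw [Prod.mk.injEq] at he; omega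
      · exact absurd rfl (havd2 _ _ he).2.1
    · -- O vs R
      exfalso
      have hm1 : ((x1 : ℕ), i + 1) ∈ insert ((i : ℕ), x2)
          (insert ((i : ℕ) + 1, y2) ((υ.erase (i, i + 1)).erase (x2, y2))) := by
        rw [← heq]; exact Finset.mem_insert_self _ _
      rcases Finset.mem_insert.mp hm1 with he | he
      · rw [Prod.mk.injEq] at he; omega
      rcases Finset.mem_insert.mp he with he | he
      · rw [Prod.mk.injEq] at he; omega
      · exact absurd rfl (havd2 _ _ he).2.2.2
    · -- O vs O
      have hm1 : ((x1 : ℕ), i + 1) ∈ insert ((x2 : ℕ), i + 1)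
          (insert ((i : ℕ), y2) ((υ.erase (i, i + 1)).erase (x2, y2))) := by
        rw [← heq]; exact Finset.mem_insert_self _ _
      have hm2 : ((i : ℕ), y1) ∈ insert ((x2 : ℕ), i + 1)
          (insert ((i : ℕ), y2) ((υ.erase (i, i + 1)).erase (x2, y2))) := by
        rw [← heq]; exact Finset.mem_insert_of_mem (Finset.mem_insert_self _ _)
      have e1 : x1 = x2 := by
        rcases Finset.mem_insert.mp hm1 with he | he
        · rw [Prod.mk.injEq] at he; exact he.1
        rcases Finset.mem_insert.mp he with he | he
        · rw [Prod.mk.injEq] at he; omega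
        · exact absurd rfl (havd2 _ _ he).2.2.2
      have e2 : y1 = y2 := by
        rcases Finset.mem_insert.mp hm2 with he | he
        · rw [Prod.mk.injEq] at he; omega
        rcases Finset.mem_insert.mp he with he | he
        · rw [Prod.mk.injEq] at he; exact he.2
        · exact absurd rfl (havd2 _ _ he).1
      rw [e1, e2]

lemma cnd_surj {n i : ℕ} {υ ω : Finset (ℕ × ℕ)} (hυ : IsLinkPattern n υ)
    (hgυ : Good i υ) (hω : IsLinkPattern n ω) (hnm : ((i : ℕ), i + 1) ∉ ω)
    (hpred : IsPredecessor n ω υ ∨ IsPredecessor n υ ω) :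
    ∃ w ∈ cS n i υ, cnd i υ w = ω := by
  obtain ⟨hi1, hin⟩ := pair_mem_bounds hυ hgυ.1
  rcases hpred with hp | hp
  · exact absurd (mem_of_pred hgυ hp) hnm
  rcases hp with ⟨x, y, f, hxy, hf, hxf, hfy, hcase⟩ |
    ⟨a, b, c, d, hab, hcd, hac, hcb, hbd, hcase⟩
  · -- bridge move from ω to υ
    obtain ⟨⟨hfl, hfr⟩, hffree⟩ := mem_fixedPts_iff.mp hf
    obtain ⟨hxl, hxyl, hyn⟩ := hω.1 _ hxy
    simp only [] at hxl hxyl hyn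
    rcases hcase with he | he
    · -- υ = insert (x,f) (ω.erase (x,y)), so (x,f) = (i,i+1)
      have hm := hgυ.1
      rw [he] at hm
      rcases Finset.mem_insert.mp hm with hxf' | hmem
      swap
      · exact absurd (Finset.mem_of_mem_erase hmem) hnm
      rw [Prod.mk.injEq] at hxf'
      obtain ⟨e1, e2⟩ := hxf'
      subst e1; subst e2
      have hyfix : y ∈ fixedPts n υ := by
        rw [mem_fixedPts_iff]
        refine ⟨⟨by omega, hyn⟩, ?_⟩
        intro p hp
        rw [he] at hp
        rcases Finset.mem_insert.mp hp with rfl | hp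
        · constructor <;> (simp only []; omega)
        · have hpm := Finset.mem_of_mem_erase hp
          have hpne := (Finset.mem_erase.mp hp).1
          have := hω.2 p hpm (i, y) hxy hpne
          exact ⟨this.2.1, this.2.2.2⟩
      refine ⟨(y, 0), Finset.mem_union_left _ (Finset.mem_image_of_mem _ hyfix), ?_⟩
      have hval : cnd i υ (y, 0) = insert (i, y) (υ.erase (i, i + 1)) := by
        unfold cnd; simp [show ¬ y < i by omega]
      have hue : υ.erase ((i : ℕ), i + 1) = ω.erase (i, y) := by
        rw [he, Finset.erase_insert]
        intro hc
        exact hnm (Finset.mem_of_mem_erase hc)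
      rw [hval, hue]
      exact Finset.insert_erase hxy
    · -- υ = insert (f,y) (ω.erase (x,y)), so (f,y) = (i,i+1)
      have hm := hgυ.1
      rw [he] at hm
      rcases Finset.mem_insert.mp hm with hfy' | hmem
      swap
      · exact absurd (Finset.mem_of_mem_erase hmem) hnm
      rw [Prod.mk.injEq] at hfy'
      obtain ⟨e1, e2⟩ := hfy'
      subst e1; subst e2
      have hxfix : x ∈ fixedPts n υ := by
        rw [mem_fixedPts_iff]
        refine ⟨⟨by omega, by omega⟩, ?_⟩
        intro p hp
        rw [he] at hp
        rcases Finset.mem_insert.mp hp with rfl | hp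
        · constructor <;> (simp only []; omega)
        · have hpm := Finset.mem_of_mem_erase hp
          have hpne := (Finset.mem_erase.mp hp).1
          have := hω.2 p hpm (x, i + 1) hxy hpne
          exact ⟨this.1, this.2.2.1⟩
      refine ⟨(x, 0), Finset.mem_union_left _ (Finset.mem_image_of_mem _ hxfix), ?_⟩
      have hval : cnd i υ (x, 0) = insert (x, i + 1) (υ.erase (i, i + 1)) := by
        unfold cnd; simp [hxf]
      have hue : υ.erase ((i : ℕ), i + 1) = ω.erase (x, i + 1) := by
        rw [he, Finset.erase_insert]
        intro hc
        exact hnm (Finset.mem_of_mem_erase hc)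
      rw [hval, hue]
      exact Finset.insert_erase hxy
  · -- crossing move from ω to υ
    obtain ⟨hal, habl, hbn⟩ := hω.1 _ hab
    obtain ⟨hcl, hcdl, hdn⟩ := hω.1 _ hcd
    simp only [] at hal habl hbn hcl hcdl hdn
    have hTsub : ∀ p ∈ (ω.erase ((a : ℕ), b)).erase (c, d), p ∈ ω := fun p hp =>
      Finset.mem_of_mem_erase (Finset.mem_of_mem_erase hp)
    rcases hcase with he | he
    · have hm := hgυ.1
      rw [he] at hm
      rcases Finset.mem_insert.mp hm with hac' | hm
      · -- (a,c) = (i,i+1)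
        rw [Prod.mk.injEq] at hac'
        obtain ⟨e1, e2⟩ := hac'
        subst e1; subst e2
        -- arcs (i,b), (i+1,d) in ω; w = (b,d)
        have hbdne : ((b : ℕ), d) ∉ ω := by
          intro hc
          have := hω.2 (i, b) hab (b, d) hc
            (fun hcc => by rw [Prod.mk.injEq] at hcc; omega)
          exact this.2.2.1 rfl
        have hwmem : ((b : ℕ), d) ∈ υ.erase (i, i + 1) := by
          rw [Finset.mem_erase, he]
          exact ⟨fun hcc => by rw [Prod.mk.injEq] at hcc; omega,
            Finset.mem_insert_of_mem (Finset.mem_insert_self _ _)⟩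
        refine ⟨(b, d), Finset.mem_union_right _ hwmem, ?_⟩
        have hval : cnd i υ (b, d) = insert (i, b) (insert (i + 1, d)
            ((υ.erase (i, i + 1)).erase (b, d))) := by
          unfold cnd
          simp [show ¬ d = 0 by omega, show ¬ d < i by omega, show i + 1 < b from hcb]
        have hue : (υ.erase ((i : ℕ), i + 1)).erase (b, d) =
            (ω.erase (i, b)).erase (i + 1, d) := by
          rw [he, Finset.erase_insert, Finset.erase_insert]
          · intro hc'
            exact hbdne (hTsub _ hc')
          · intro hc'
            rcases Finset.mem_insert.mp hc' with hc'' | hc''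
            · rw [Prod.mk.injEq] at hc''; omega
            · exact hnm (hTsub _ hc'')
        rw [hval, hue]
        have h1 : ((i : ℕ) + 1, d) ∈ ω.erase (i, b) :=
          Finset.mem_erase.mpr ⟨fun hcc => by rw [Prod.mk.injEq] at hcc; omega, hcd⟩
        rw [Finset.insert_erase h1, Finset.insert_erase hab]
      rcases Finset.mem_insert.mp hm with hbd' | hm
      · -- (b,d) = (i,i+1)
        rw [Prod.mk.injEq] at hbd'
        obtain ⟨e1, e2⟩ := hbd'
        subst e1; subst e2
        -- arcs (a,i), (c,i+1) in ω; w = (a,c)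
        have hacne : ((a : ℕ), c) ∉ ω := by
          intro hc
          have := hω.2 (a, i) hab (a, c) hc
            (fun hcc => by rw [Prod.mk.injEq] at hcc; omega)
          exact this.1 rfl
        have hwmem : ((a : ℕ), c) ∈ υ.erase (i, i + 1) := by
          rw [Finset.mem_erase, he]
          exact ⟨fun hcc => by rw [Prod.mk.injEq] at hcc; omega,
            Finset.mem_insert_self _ _⟩
        refine ⟨(a, c), Finset.mem_union_right _ hwmem, ?_⟩
        have hval : cnd i υ (a, c) = insert (a, i) (insert (c, i + 1)
            ((υ.erase (i, i + 1)).erase (a, c))) := by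
          unfold cnd
          simp [show ¬ c = 0 by omega, show c < i from hcb]
        have hue : (υ.erase ((i : ℕ), i + 1)).erase (a, c) =
            (ω.erase (a, i)).erase (c, i + 1) := by
          rw [he, Finset.insert_comm, Finset.erase_insert, Finset.erase_insert]
          · intro hc'
            exact hacne (hTsub _ hc')
          · intro hc'
            rcases Finset.mem_insert.mp hc' with hc'' | hc''
            · rw [Prod.mk.injEq] at hc''; omega
            · exact hnm (hTsub _ hc'')
        rw [hval, hue]
        have h1 : ((c : ℕ), i + 1) ∈ ω.erase (a, i) :=
          Finset.mem_erase.mpr ⟨fun hcc => by rw [Prod.mk.injEq] at hcc; omega, hcd⟩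
        rw [Finset.insert_erase h1, Finset.insert_erase hab]
      · exact absurd (hTsub _ hm) hnm
    · have hm := hgυ.1
      rw [he] at hm
      rcases Finset.mem_insert.mp hm with had' | hm
      · rw [Prod.mk.injEq] at had'
        omega
      rcases Finset.mem_insert.mp hm with hcb' | hm
      · -- (c,b) = (i,i+1)
        rw [Prod.mk.injEq] at hcb'
        obtain ⟨e1, e2⟩ := hcb'
        subst e1; subst e2
        -- arcs (a,i+1), (i,d) in ω; w = (a,d)
        have hadne : ((a : ℕ), d) ∉ ω := by
          intro hc
          have := hω.2 (a, i + 1) hab (a, d) hc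
            (fun hcc => by rw [Prod.mk.injEq] at hcc; omega)
          exact this.1 rfl
        have hwmem : ((a : ℕ), d) ∈ υ.erase (i, i + 1) := by
          rw [Finset.mem_erase, he]
          exact ⟨fun hcc => by rw [Prod.mk.injEq] at hcc; omega,
            Finset.mem_insert_self _ _⟩
        refine ⟨(a, d), Finset.mem_union_right _ hwmem, ?_⟩
        have hval : cnd i υ (a, d) = insert (a, i + 1) (insert (i, d)
            ((υ.erase (i, i + 1)).erase (a, d))) := by
          unfold cnd
          simp [show ¬ d = 0 by omega, show ¬ d < i by omega, show ¬ i + 1 < a by omega]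
        have hue : (υ.erase ((i : ℕ), i + 1)).erase (a, d) =
            (ω.erase (a, i + 1)).erase (i, d) := by
          rw [he, Finset.insert_comm, Finset.erase_insert, Finset.erase_insert]
          · intro hc'
            exact hadne (hTsub _ hc')
          · intro hc'
            rcases Finset.mem_insert.mp hc' with hc'' | hc''
            · rw [Prod.mk.injEq] at hc''; omega
            · exact hnm (hTsub _ hc'')
        rw [hval, hue]
        have h1 : ((i : ℕ), d) ∈ ω.erase (a, i + 1) :=
          Finset.mem_erase.mpr ⟨fun hcc => by rw [Prod.mk.injEq] at hcc; omega, hcd⟩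
        rw [Finset.insert_erase h1, Finset.insert_erase hab]
      · exact absurd (hTsub _ hm) hnm

lemma lpLE_of_RInt_le {n : ℕ} {ω υ σ : Finset (ℕ × ℕ)}
    (h1 : ∀ a b : ℕ, RInt ω a b ≤ RInt υ a b) (h2 : lpLE n υ σ) : lpLE n ω σ :=
  fun a b ha hab hbn => le_trans (h1 a b) (h2 a b ha hab hbn)

lemma card_cS {n k i : ℕ} {υ : Finset (ℕ × ℕ)} (hυ : IsLinkPattern n υ)
    (hgυ : Good i υ) (hυk : υ.card = k) (hkn : 2 * k ≤ n) :
    (cS n i υ).card = n - k - 1 := by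
  have hk1 : 1 ≤ k := by
    rw [← hυk]; exact Finset.card_pos.mpr ⟨_, hgυ.1⟩
  unfold cS
  rw [Finset.card_union_of_disjoint, Finset.card_image_of_injective,
    Finset.card_erase_of_mem hgυ.1, card_fixedPts hυ, hυk]
  · omega
  · intro a b hab
    simpa using congrArg Prod.fst hab
  · rw [Finset.disjoint_left]
    rintro ⟨u, v⟩ h1 h2
    obtain ⟨f, _, heq⟩ := Finset.mem_image.mp h1
    have hv : v = 0 := by
      have := congrArg Prod.snd heq; simpa using this.symm
    have := hυ.1 _ (Finset.mem_of_mem_erase h2)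
    simp only [] at this
    omega

lemma aNum_extract {n k i : ℕ} {σ υ : Finset (ℕ × ℕ)}
    (hσ : IsLinkPattern n σ) (hgσ : Good i σ) (hσk : σ.card = k)
    (hυ : IsLinkPattern n υ) (hgυ : Good i υ) (hυk : υ.card = k)
    (hkn : 2 * k ≤ n) (hle : lpLE n υ σ) :
    aNum n k σ υ = aNum (n - 2) (k - 1) (extract i σ) (extract i υ) + (n - k - 1) := by
  obtain ⟨hi1, hin⟩ := pair_mem_bounds hσ hgσ.1
  have hk1 : 1 ≤ k := by
    rw [← hσk]; exact Finset.card_pos.mpr ⟨_, hgσ.1⟩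
  unfold aNum
  set P : Finset (ℕ × ℕ) → Prop := fun ω => IsLinkPattern n ω ∧ ω.card = k ∧
    lpLE n ω σ ∧ (IsPredecessor n ω υ ∨ IsPredecessor n υ ω) with hP
  set N : Finset (Finset (ℕ × ℕ)) := (allSub n).filter P with hN
  have hsplit : (N.filter (fun ω => (i, i + 1) ∈ ω)).card +
      (N.filter (fun ω => ¬ (i, i + 1) ∈ ω)).card = N.card :=
    Finset.card_filter_add_card_filter_not _
  -- Part 1 : patterns containing (i,i+1) correspond to neighbors downstairs
  have hpart1 : (N.filter (fun ω => (i, i + 1) ∈ ω)).card =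
      ((allSub (n - 2)).filter (fun ω' => IsLinkPattern (n - 2) ω' ∧ ω'.card = k - 1 ∧
        lpLE (n - 2) ω' (extract i σ) ∧
        (IsPredecessor (n - 2) ω' (extract i υ) ∨
         IsPredecessor (n - 2) (extract i υ) ω'))).card := by
    apply Finset.card_nbij' (extract i) (inj i)
    · intro ω hω
      rw [Finset.mem_coe, Finset.mem_filter] at hω
      obtain ⟨hω1, hq⟩ := hω
      rw [hN, Finset.mem_filter] at hω1
      obtain ⟨hsub, hω2, hω3, hω4, hω5⟩ := hω1
      have hgω : Good i ω := good_of_mem hω2 hq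
      rw [Finset.mem_coe, Finset.mem_filter]
      refine ⟨mem_allSub (extract_isLinkPattern hω2 hgω),
        extract_isLinkPattern hω2 hgω, ?_, ?_, ?_⟩
      · rw [extract_card hgω, hω3]
      · exact (lpLE_extract_iff hσ hgσ hω2 hgω).mp hω4
      · rcases hω5 with h | h
        · exact Or.inl ((isPred_extract_iff hω2 hgω hυ hgυ).mp h)
        · exact Or.inr ((isPred_extract_iff hυ hgυ hω2 hgω).mp h)
    · intro ω' hω'
      rw [Finset.mem_coe, Finset.mem_filter] at hω'
      obtain ⟨hsub, hω1, hω2, hω3, hω4⟩ := hω'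
      have hpat : IsLinkPattern n (inj i ω') := inj_isLinkPattern hω1 hi1 hin
      have hgω : Good i (inj i ω') := good_inj i ω'
      have hei : extract i (inj i ω') = ω' := extract_inj i ω'
      rw [Finset.mem_coe, Finset.mem_filter, hN, Finset.mem_filter]
      refine ⟨⟨mem_allSub hpat, hpat, ?_, ?_, ?_⟩, Finset.mem_insert_self _ _⟩
      · rw [inj_card, hω2]; omega
      · exact (lpLE_extract_iff hσ hgσ hpat hgω).mpr (by rw [hei]; exact hω3)
      · rcases hω4 with h | h
        · exact Or.inl ((isPred_extract_iff hpat hgω hυ hgυ).mpr (by rw [hei]; exact h))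
        · exact Or.inr ((isPred_extract_iff hυ hgυ hpat hgω).mpr (by rw [hei]; exact h))
    · intro ω hω
      rw [Finset.mem_coe, Finset.mem_filter] at hω
      obtain ⟨hω1, hq⟩ := hω
      rw [hN, Finset.mem_filter] at hω1
      exact inj_extract (good_of_mem hω1.2.1 hq)
    · intro ω' hω'
      exact extract_inj i ω'
  -- Part 2 : patterns not containing (i,i+1) are the n-k-1 candidates
  have hpart2 : (N.filter (fun ω => ¬ (i, i + 1) ∈ ω)).card = n - k - 1 := by
    rw [← card_cS hυ hgυ hυk hkn]
    symm
    apply Finset.card_bij (fun w _ => cnd i υ w)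
    · intro w hw
      obtain ⟨hpat, hcard, hR, hpred, hnm⟩ := cnd_spec hυ hgυ hw
      rw [Finset.mem_filter, hN, Finset.mem_filter]
      exact ⟨⟨mem_allSub hpat, hpat, by rw [hcard, hυk],
        lpLE_of_RInt_le hR hle, Or.inr hpred⟩, hnm⟩
    · intro w1 hw1 w2 hw2 heq
      exact cnd_inj hυ hgυ w1 hw1 w2 hw2 heq
    · intro ω hω
      rw [Finset.mem_filter] at hω
      obtain ⟨hω1, hq⟩ := hω
      rw [hN, Finset.mem_filter] at hω1
      obtain ⟨w, hw, hcw⟩ := cnd_surj hυ hgυ hω1.2.1 hq hω1.2.2.2.2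
      exact ⟨w, hw, hcw⟩
  rw [← hsplit, hpart1, hpart2]

/-- extracting a common minimal arc `(i,i+1)` preserves the order `≤`,
singularity of the point, and membership in `Sing`. -/
theorem extract_min_arc (n k : ℕ) (hnk : 2 * k ≤ n) (σ υ : Finset (ℕ × ℕ)) (i : ℕ)
    (hσ : IsMaximal n σ) (hσk : σ.card = k)
    (hυ : IsLinkPattern n υ) (hυk : υ.card = k)
    (hiσ : (i, i + 1) ∈ σ) (hiυ : (i, i + 1) ∈ υ) :
    (lpLE n υ σ ↔ lpLE (n - 2) (extract i υ) (extract i σ)) ∧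
    ((lpLE n υ σ ∧ IsSingularPt n k σ υ) ↔
      (lpLE (n - 2) (extract i υ) (extract i σ) ∧
        IsSingularPt (n - 2) (k - 1) (extract i σ) (extract i υ))) ∧
    (InSing n k σ υ ↔ InSing (n - 2) (k - 1) (extract i σ) (extract i υ)) := by
  obtain ⟨hσp, hb0, hc0⟩ := hσ
  have hgσ : Good i σ := good_of_mem hσp hiσ
  have hgυ : Good i υ := good_of_mem hυ hiυ
  obtain ⟨hi1, hin⟩ := pair_mem_bounds hσp hiσ
  have hk1 : 1 ≤ k := by
    rw [← hσk]; exact Finset.card_pos.mpr ⟨_, hiσ⟩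
  have claim1 := lpLE_extract_iff hσp hgσ hυ hgυ
  have prel : pNum n k σ = pNum (n - 2) (k - 1) (extract i σ) + (n - k - 1) :=
    pNum_extract hk1 hnk hb0 hc0 (bridges_extract_zero hσp hgσ hb0)
      (crossings_extract_zero hσp hgσ hc0)
  -- singularity transfer for any pattern below σ containing (i,i+1)
  have singiff : ∀ ω : Finset (ℕ × ℕ), IsLinkPattern n ω → Good i ω → ω.card = k →
      lpLE n ω σ → (IsSingularPt n k σ ω ↔
        IsSingularPt (n - 2) (k - 1) (extract i σ) (extract i ω)) := by
    intro ω hω hgω hωk hωle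
    have anrel := aNum_extract hσp hgσ hσk hω hgω hωk hnk hωle
    unfold IsSingularPt
    omega
  have claim2 : (lpLE n υ σ ∧ IsSingularPt n k σ υ) ↔
      (lpLE (n - 2) (extract i υ) (extract i σ) ∧
        IsSingularPt (n - 2) (k - 1) (extract i σ) (extract i υ)) := by
    constructor
    · rintro ⟨h1, h2⟩
      exact ⟨claim1.mp h1, (singiff υ hυ hgυ hυk h1).mp h2⟩
    · rintro ⟨h1, h2⟩
      have h1' := claim1.mpr h1
      exact ⟨h1', (singiff υ hυ hgυ hυk h1').mpr h2⟩
  refine ⟨claim1, claim2, ?_⟩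
  -- membership of (i,i+1) in anything between υ and σ
  have hmem_between : ∀ ω : Finset (ℕ × ℕ), IsLinkPattern n ω → lpLE n υ ω →
      (i, i + 1) ∈ ω := by
    intro ω hω hυω
    have h1 : 1 ≤ RInt υ i (i + 1) := by
      unfold RInt
      refine Finset.card_pos.mpr ⟨(i, i + 1), ?_⟩
      rw [Finset.mem_filter]
      exact ⟨hiυ, le_refl _, le_refl _⟩
    have h2 := hυω i (i + 1) hi1 (by omega) hin
    have h3 : 0 < RInt ω i (i + 1) := by omega
    unfold RInt at h3
    obtain ⟨p, hp⟩ := Finset.card_pos.mp h3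
    rw [Finset.mem_filter] at hp
    obtain ⟨hpm, hp1, hp2⟩ := hp
    have := hω.1 p hpm
    have hpe : p = (i, i + 1) := by
      have e1 : p.1 = i := by omega
      have e2 : p.2 = i + 1 := by omega
      exact Prod.ext e1 e2
    rwa [hpe] at hpm
  constructor
  · rintro ⟨_, _, hlev, hsing, hmax⟩
    refine ⟨extract_isLinkPattern hυ hgυ, by rw [extract_card hgυ, hυk],
      claim1.mp hlev, (singiff υ hυ hgυ hυk hlev).mp hsing, ?_⟩
    intro ω' hω'pat hω'card hω'le hω'sing hυ'le
    set ω := inj i ω' with hωdef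
    have hωpat : IsLinkPattern n ω := inj_isLinkPattern hω'pat hi1 hin
    have hgω : Good i ω := good_inj i ω'
    have hei : extract i ω = ω' := extract_inj i ω'
    have hωcard : ω.card = k := by rw [hωdef, inj_card, hω'card]; omega
    have hωle : lpLE n ω σ :=
      (lpLE_extract_iff hσp hgσ hωpat hgω).mpr (by rw [hei]; exact hω'le)
    have hωsing : IsSingularPt n k σ ω := by
      refine (singiff ω hωpat hgω hωcard hωle).mpr ?_
      rw [hei]
      exact hω'sing
    have hυω : lpLE n υ ω :=
      (lpLE_extract_iff hωpat hgω hυ hgυ).mpr (by rw [hei]; exact hυ'le)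
    have heq : ω = υ := hmax ω hωpat hωcard hωle hωsing hυω
    rw [← hei, heq]
  · rintro ⟨hp1, hp2, hp3, hp4, hmax'⟩
    have hlev : lpLE n υ σ := claim1.mpr hp3
    refine ⟨hυ, hυk, hlev, (singiff υ hυ hgυ hυk hlev).mpr hp4, ?_⟩
    intro ω hωpat hωcard hωle hωsing hυω
    have hmem : (i, i + 1) ∈ ω := hmem_between ω hωpat hυω
    have hgω : Good i ω := good_of_mem hωpat hmem
    have heq' : extract i ω = extract i υ := by
      apply hmax' (extract i ω) (extract_isLinkPattern hωpat hgω)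
        (by rw [extract_card hgω, hωcard])
        ((lpLE_extract_iff hσp hgσ hωpat hgω).mp hωle)
        ((singiff ω hωpat hgω hωcard hωle).mp hωsing)
        ((lpLE_extract_iff hωpat hgω hυ hgυ).mp hυω)
    rw [← inj_extract hgω, heq', inj_extract hgυ]

end LinkPatterns
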